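/- arXiv:1811.00643 — 6 statements merged into one kernel-verified Lean document; each statement's English description precedes it below -/
import Mathlib

section
/- For every invitation set I ⊆ V, the acceptance probability under the threshold friending process equals the probability of success under a random realization: f(I) = E[f(ĝ,I)], i.e., the probability over the thresholds that t ∈ C_∞(I) equals the probability over random realizations ĝ that t ∈ H_∞(ĝ,I). -/
open Finset MeasureTheory

/-- A social network with weights, an initiator `s`, and a target user `t ∉ N_s`. -/
structure FriendNet (V : Type) [Fintype V] [DecidableEq V] where
  G : SimpleGraph V
  adjDec : DecidableRel G.Adj
  w : V → V → ℝ
  w_pos : ∀ u v : V, G.Adj u v → 0 < w u v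
  w_le_one : ∀ u v : V, G.Adj u v → w u v ≤ 1
  w_eq_zero : ∀ u v : V, ¬ G.Adj u v → w u v = 0
  w_sum_le_one : ∀ v : V, ∑ u : V, w u v ≤ 1
  s : V
  t : V
  t_ne_s : t ≠ s
  t_not_friend : ¬ G.Adj s t

variable {V : Type} [Fintype V] [DecidableEq V]

namespace FriendNet

/-- The current friends (neighbors) `N_v` of a user `v`. -/
def Nbr (net : FriendNet V) (v : V) : Finset V :=
  letI := net.adjDec
  Finset.univ.filter fun u => net.G.Adj u v

/-- `Φ(C)`: users not in `C` willing to accept an invitation, given thresholds `θ`. -/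
noncomputable def Phi (net : FriendNet V) (θ : V → ℝ) (C : Finset V) : Finset V :=
  Finset.univ.filter fun u => u ∉ C ∧ θ u ≤ ∑ v ∈ C, net.w v u

/-- One round of the friending process: `C ∪ (Φ(C) ∩ I)`. -/
noncomputable def Cstep (net : FriendNet V) (θ : V → ℝ) (I : Finset V) (C : Finset V) : Finset V :=
  C ∪ (net.Phi θ C ∩ I)

/-- `C_∞(I)`: the final set of the threshold friending process (it stabilizes after
`|V|` rounds). -/
noncomputable def Cinf (net : FriendNet V) (θ : V → ℝ) (I : Finset V) : Finset V :=
  (net.Cstep θ I)^[Fintype.card V] (net.Nbr net.s)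

/-- The distribution of the thresholds: i.i.d. uniform on `[0,1]`. -/
noncomputable def thetaMeasure (V : Type) [Fintype V] : Measure (V → ℝ) :=
  Measure.pi fun _ => volume.restrict (Set.Icc (0 : ℝ) 1)

/-- The acceptance probability `f(I)`: probability over the thresholds that `t ∈ C_∞(I)`. -/
noncomputable def f (net : FriendNet V) (I : Finset V) : ℝ :=
  (thetaMeasure V {θ : V → ℝ | net.t ∈ net.Cinf θ I}).toReal

/-- `p_max`: the maximum acceptance probability over all invitation sets. -/
noncomputable def pmax (net : FriendNet V) : ℝ := ⨆ I : Finset V, net.f I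

/-- A realization: each user selects at most one current friend (`none` plays ℵ0). -/
def IsRealization (net : FriendNet V) (g : V → Option V) : Prop :=
  ∀ v u : V, g v = some u → net.G.Adj u v

/-- `Pr[g]`, the probability of generating the realization `g`. -/
noncomputable def realWeight (net : FriendNet V) (g : V → Option V) : ℝ :=
  ∏ v : V, (g v).elim (1 - ∑ u : V, net.w u v) (fun u => net.w u v)

/-- `Ψ(H)` for a realization `g`. -/
def Psi (g : V → Option V) (H : Finset V) : Finset V :=
  Finset.univ.filter fun v => v ∉ H ∧ ∃ u ∈ H, g v = some u

/-- One round of Process 2: `H ∪ (Ψ(H) ∩ I)`. -/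
def Hstep (g : V → Option V) (I : Finset V) (H : Finset V) : Finset V :=
  H ∪ (Psi g H ∩ I)

/-- `H_∞(g, I)`: the final set of Process 2 (it stabilizes after `|V|` rounds). -/
def Hinf (net : FriendNet V) (g : V → Option V) (I : Finset V) : Finset V :=
  (Hstep g I)^[Fintype.card V] (net.Nbr net.s)

end FriendNet

/-- The loop of Algorithm 1 (backward trace), with fuel. `none` plays ℵ0. -/
def traceAux (g : V → Option V) (Ns : Finset V) : ℕ → V → Finset (Option V) → Finset (Option V)
  | 0, _, acc => acc
  | m + 1, u, acc =>
    match g u with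
    | none => insert none acc
    | some v =>
      if some v ∈ acc then insert none acc
      else if v ∈ Ns then acc
      else traceAux g Ns m v (insert (some v) acc)

namespace FriendNet

/-- The backward trace `t(g)` computed by Algorithm 1. -/
def trace (net : FriendNet V) (g : V → Option V) : Finset (Option V) :=
  traceAux g (net.Nbr net.s) (Fintype.card V + 1) net.t {some net.t}

/-- `f(g, I)`: the indicator that `I` covers `g`, i.e. `t(g) ⊆ I`. -/
noncomputable def fg (net : FriendNet V) (g : V → Option V) (I : Finset V) : ℝ :=
  if net.trace g ⊆ I.image some then 1 else 0

/-- `F(B_l, I) = Σ_{g ∈ B_l} f(g, I)`. -/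
noncomputable def F (net : FriendNet V) {l : ℕ} (B : Fin l → V → Option V)
    (I : Finset V) : ℝ :=
  ∑ i : Fin l, net.fg (B i) I

end FriendNet

instance : MeasurableSpace (V → Option V) := ⊤

/-- The distribution of a random realization `ĝ`. -/
noncomputable def FriendNet.realMeasure (net : FriendNet V) : Measure (V → Option V) :=
  ∑ g : V → Option V, ENNReal.ofReal (net.realWeight g) • Measure.dirac g

open Classical in
/-- `V_max`: users outside `{s} ∪ N_s` lying on some path from `{s} ∪ N_s` to `t`. -/
noncomputable def FriendNet.Vmax (net : FriendNet V) : Finset V :=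
  Finset.univ.filter fun u =>
    u ∉ insert net.s (net.Nbr net.s) ∧
      ∃ v ∈ insert net.s (net.Nbr net.s),
        ∃ p : net.G.Walk v net.t, p.IsPath ∧ u ∈ p.support

section Helpers

open Set

variable (net : FriendNet V)

lemma w_nonneg (u v : V) : 0 ≤ net.w u v := by
  by_cases h : net.G.Adj u v
  · exact (net.w_pos u v h).le
  · rw [net.w_eq_zero u v h]

lemma sum_w_nonneg (v : V) (S : Finset V) : 0 ≤ ∑ u ∈ S, net.w u v :=
  Finset.sum_nonneg fun u _ => w_nonneg net u v

lemma sum_w_le_one (v : V) (S : Finset V) : ∑ u ∈ S, net.w u v ≤ 1 :=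
  le_trans (Finset.sum_le_sum_of_subset_of_nonneg (Finset.subset_univ S)
    (fun u _ _ => w_nonneg net u v)) (net.w_sum_le_one v)

lemma sum_w_mono (v : V) {S S' : Finset V} (h : S ⊆ S') :
    ∑ u ∈ S, net.w u v ≤ ∑ u ∈ S', net.w u v :=
  Finset.sum_le_sum_of_subset_of_nonneg h (fun u _ _ => w_nonneg net u v)

/-- The per-coordinate measure. -/
noncomputable abbrev mu0 : Measure ℝ := volume.restrict (Set.Icc (0:ℝ) 1)

instance : IsProbabilityMeasure mu0 := by
  constructor
  rw [Measure.restrict_apply MeasurableSet.univ, Set.univ_inter, Real.volume_Icc]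
  norm_num

lemma mu0_univ : (mu0 Set.univ).toReal = 1 := by
  rw [measure_univ]; rfl

lemma mu0_Iic {a : ℝ} (h0 : 0 ≤ a) (h1 : a ≤ 1) : (mu0 {x | x ≤ a}).toReal = a := by
  have : {x : ℝ | x ≤ a} ∩ Set.Icc 0 1 = Set.Icc 0 a := by
    ext x
    simp only [Set.mem_inter_iff, Set.mem_setOf_eq, Set.mem_Icc]
    constructor
    · rintro ⟨h, h0x, _⟩; exact ⟨h0x, h⟩
    · rintro ⟨h0x, hx⟩; exact ⟨hx, h0x, hx.trans h1⟩
  rw [show {x : ℝ | x ≤ a} = Set.Iic a from rfl, Measure.restrict_apply measurableSet_Iic,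
    show Set.Iic a ∩ Set.Icc 0 1 = Set.Icc 0 a from this,
    Real.volume_Icc, ENNReal.toReal_ofReal (by linarith)]
  ring

lemma mu0_Ioc {a b : ℝ} (h0 : 0 ≤ a) (hab : a ≤ b) (h1 : b ≤ 1) :
    (mu0 {x | a < x ∧ x ≤ b}).toReal = b - a := by
  have hs : {x : ℝ | a < x ∧ x ≤ b} = Set.Ioc a b := rfl
  have : Set.Ioc a b ∩ Set.Icc 0 1 = Set.Ioc a b := by
    apply Set.inter_eq_left.mpr
    intro x hx
    exact ⟨h0.trans hx.1.le, hx.2.trans h1⟩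
  rw [hs, Measure.restrict_apply measurableSet_Ioc, this, Real.volume_Ioc,
    ENNReal.toReal_ofReal (by linarith)]

lemma mu0_Ioi {a : ℝ} (h0 : 0 ≤ a) (h1 : a ≤ 1) : (mu0 {x | a < x}).toReal = 1 - a := by
  have : {x : ℝ | a < x} ∩ Set.Icc 0 1 = Set.Ioc a 1 := by
    ext x
    simp only [Set.mem_inter_iff, Set.mem_setOf_eq, Set.mem_Icc, Set.mem_Ioc]
    constructor
    · rintro ⟨h, _, hx1⟩; exact ⟨h, hx1⟩
    · rintro ⟨h, hx1⟩; exact ⟨h, h0.trans h.le, hx1⟩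
  rw [show {x : ℝ | a < x} = Set.Ioi a from rfl, Measure.restrict_apply measurableSet_Ioi,
    show Set.Ioi a ∩ Set.Icc 0 1 = Set.Ioc a 1 from this,
    Real.volume_Ioc, ENNReal.toReal_ofReal (by linarith)]

lemma measurableSet_iffCond (p q r : Prop) (c : ℝ) :
    MeasurableSet {x : ℝ | p ↔ q ∨ (r ∧ x ≤ c)} := by
  classical
  by_cases hp : p <;> by_cases hq : q <;> by_cases hr : r <;>
    simp only [hp, hq, hr, true_iff, false_iff, true_or, false_or, true_and, false_and,
      iff_true, iff_false, not_or, not_and, not_false_iff, not_le, or_false, and_true] <;>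
    first
      | exact MeasurableSet.univ
      | exact (measurableSet_Iic : MeasurableSet (Set.Iic c))
      | exact (measurableSet_Ioi : MeasurableSet (Set.Ioi c))
      | simp

end Helpers

section Conditions

open scoped Classical

variable (net : FriendNet V) (I : Finset V)

/-- Generic per-user condition that a trajectory `T` is consistent with trigger
predicate `q` at user `v`. -/
def CondAux (T : ℕ → Finset V) (v : V) (q : ℕ → Prop) : Prop :=
  ∀ i < Fintype.card V,
    (v ∈ T (i + 1) ↔ v ∈ T i ∨ ((v ∈ I ∧ v ∉ T i) ∧ q i))

/-- Threshold-side per-user condition. -/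
def CondT (T : ℕ → Finset V) (v : V) (x : ℝ) : Prop :=
  CondAux I T v (fun i => x ≤ ∑ u ∈ T i, net.w u v)

/-- Realization-side per-user condition. -/
def CondG (T : ℕ → Finset V) (v : V) (o : Option V) : Prop :=
  CondAux I T v (fun i => ∃ u ∈ T i, o = some u)

variable {I}

lemma chain_mono {T : ℕ → Finset V} (hchain : ∀ i < Fintype.card V, T i ⊆ T (i + 1))
    {i j : ℕ} (hij : i ≤ j) (hj : j ≤ Fintype.card V) : T i ⊆ T j := by
  induction j with
  | zero => simpa [Nat.le_zero.mp hij] using Finset.Subset.refl _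
  | succ m ih =>
    rcases Nat.lt_or_ge i (m + 1) with h | h
    · exact (ih (by omega) (by omega)).trans (hchain m (by omega))
    · have : i = m + 1 := by omega
      simpa [this] using Finset.Subset.refl _

lemma condAux_broken {T : ℕ → Finset V} {v : V} {q : ℕ → Prop} {i : ℕ}
    (hi : i < Fintype.card V) (hv : v ∈ T i) (hv' : v ∉ T (i + 1)) :
    ¬ CondAux I T v q := fun h => hv' ((h i hi).mpr (Or.inl hv))

lemma condAux_of_mem0 {T : ℕ → Finset V} (hchain : ∀ i < Fintype.card V, T i ⊆ T (i + 1))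
    {v : V} (hv : v ∈ T 0) (q : ℕ → Prop) : CondAux I T v q := by
  intro i hi
  have h1 : v ∈ T i := chain_mono hchain (Nat.zero_le i) (by omega) hv
  have h2 : v ∈ T (i + 1) := chain_mono hchain (Nat.zero_le _) (by omega) hv
  exact iff_of_true h2 (Or.inl h1)

lemma condAux_notmem {T : ℕ → Finset V} {v : V} (hv0 : v ∉ T 0)
    (hall : ∀ i < Fintype.card V, v ∉ T (i + 1)) {i : ℕ} (hi : i ≤ Fintype.card V) :
    v ∉ T i := by
  cases i with
  | zero => exact hv0
  | succ m => exact hall m (by omega)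

lemma condAux_notI_all {T : ℕ → Finset V} {v : V} (hv0 : v ∉ T 0) (hI : v ∉ I)
    (hall : ∀ i < Fintype.card V, v ∉ T (i + 1)) (q : ℕ → Prop) : CondAux I T v q := by
  intro i hi
  have h1 : v ∉ T i := condAux_notmem hv0 hall (by omega)
  have h2 : v ∉ T (i + 1) := hall i hi
  exact iff_of_false h2 (by rintro (h | ⟨⟨h, _⟩, _⟩) <;> [exact h1 h; exact hI h])

lemma condAux_notI_ex {T : ℕ → Finset V} {v : V} (hv0 : v ∉ T 0) (hI : v ∉ I)
    (hex : ∃ i < Fintype.card V, v ∈ T (i + 1)) (q : ℕ → Prop) : ¬ CondAux I T v q := by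
  intro hc
  have hex' : ∃ i, i < Fintype.card V ∧ v ∈ T (i + 1) := by
    obtain ⟨i, hi, hv⟩ := hex; exact ⟨i, hi, hv⟩
  classical
  let k := Nat.find hex'
  obtain ⟨hk, hvk⟩ := Nat.find_spec hex'
  have hvk0 : v ∉ T k := by
    have hmin := fun m (hm : m < k) => Nat.find_min hex' hm
    match hk0 : k, hvk0 : hvk, hmin with
    | 0, _, _ => exact hv0
    | (m+1), hvk', hmin' =>
      intro hmem
      exact hmin' m (by omega) ⟨by omega, hmem⟩
  rcases (hc k hk).mp hvk with h | ⟨⟨h, _⟩, _⟩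
  · exact hvk0 h
  · exact hI h

lemma condAux_never {T : ℕ → Finset V} {v : V} (hv0 : v ∉ T 0) (hI : v ∈ I)
    (hall : ∀ i < Fintype.card V, v ∉ T (i + 1)) {q : ℕ → Prop}
    (hq : ∀ i j, i ≤ j → j < Fintype.card V → q i → q j)
    (hn : 0 < Fintype.card V) :
    CondAux I T v q ↔ ¬ q (Fintype.card V - 1) := by
  constructor
  · intro hc hqn
    have h := (hc (Fintype.card V - 1) (by omega))
    have hvi : v ∉ T (Fintype.card V - 1) := condAux_notmem hv0 hall (by omega)
    have : v ∈ T (Fintype.card V - 1 + 1) := h.mpr (Or.inr ⟨⟨hI, hvi⟩, hqn⟩)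
    exact hall _ (by omega) this
  · intro hqn i hi
    have h1 : v ∉ T i := condAux_notmem hv0 hall (by omega)
    have h2 : v ∉ T (i + 1) := hall i hi
    refine iff_of_false h2 ?_
    rintro (h | ⟨_, hqi⟩)
    · exact h1 h
    · exact hqn (hq i (Fintype.card V - 1) (by omega) (by omega) hqi)

lemma condAux_enter {T : ℕ → Finset V} {v : V}
    (hchain : ∀ i < Fintype.card V, T i ⊆ T (i + 1)) (hv0 : v ∉ T 0) (hI : v ∈ I)
    {k : ℕ} (hk : k < Fintype.card V) (hvk1 : v ∈ T (k + 1))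
    (hmin : ∀ j < k, v ∉ T (j + 1)) {q : ℕ → Prop} :
    CondAux I T v q ↔ (q k ∧ ∀ j < k, ¬ q j) := by
  have hnotmem : ∀ i ≤ k, v ∉ T i := by
    intro i hi
    cases i with
    | zero => exact hv0
    | succ m => exact hmin m (by omega)
  constructor
  · intro hc
    constructor
    · rcases (hc k hk).mp hvk1 with h | ⟨_, hq⟩
      · exact absurd h (hnotmem k le_rfl)
      · exact hq
    · intro j hj hqj
      have := (hc j (by omega)).mpr (Or.inr ⟨⟨hI, hnotmem j (by omega)⟩, hqj⟩)
      exact hmin j hj this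
  · rintro ⟨hqk, hqlt⟩ i hi
    rcases Nat.lt_trichotomy i k with h | h | h
    · exact iff_of_false (hmin i h) (by
        rintro (hm | ⟨_, hqi⟩)
        · exact hnotmem i (by omega) hm
        · exact hqlt i h hqi)
    · subst h
      exact iff_of_true hvk1 (Or.inr ⟨⟨hI, hnotmem i le_rfl⟩, hqk⟩)
    · have hmem : v ∈ T i := chain_mono hchain (by omega : k + 1 ≤ i) (by omega) hvk1
      have hmem' : v ∈ T (i + 1) :=
        chain_mono hchain (by omega : k + 1 ≤ i + 1) (by omega) hvk1
      exact iff_of_true hmem' (Or.inl hmem)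

end Conditions

section Core

open scoped Classical

variable (net : FriendNet V) {I : Finset V}

/-- The weight of one coordinate of a realization. -/
noncomputable def wgt (v : V) (o : Option V) : ℝ :=
  o.elim (1 - ∑ u : V, net.w u v) fun u => net.w u v

lemma sum_wgt_total (v : V) : ∑ o : Option V, wgt net v o = 1 := by
  rw [Fintype.sum_option]; simp [wgt]

lemma sum_wgt_mem (v : V) (S : Finset V) (p : Option V → Prop) [DecidablePred p]
    (hp : ∀ o, p o ↔ ∃ u ∈ S, o = some u) :
    ∑ o : Option V, wgt net v o * (if p o then 1 else 0)
      = ∑ u ∈ S, net.w u v := by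
  have hco : ∀ o : Option V, (if p o then (1:ℝ) else 0)
      = if ∃ u ∈ S, o = some u then 1 else 0 := by
    intro o
    by_cases h : p o
    · rw [if_pos h, if_pos ((hp o).mp h)]
    · rw [if_neg h, if_neg (fun hh => h ((hp o).mpr hh))]
  simp only [hco]
  rw [Fintype.sum_option]
  have hnone : (if ∃ u ∈ S, (none : Option V) = some u then (1:ℝ) else 0) = 0 := by simp
  have hsome : ∀ u : V, (if ∃ u' ∈ S, (some u : Option V) = some u' then (1:ℝ) else 0)
      = if u ∈ S then 1 else 0 := by
    intro u; congr 1; simp [eq_comm]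
  simp only [hnone, hsome, mul_zero, zero_add, wgt, Option.elim, mul_ite, mul_one, mul_zero]
  rw [Finset.sum_ite_mem, Finset.univ_inter]

lemma sum_wgt_notMem (v : V) (S : Finset V) (p : Option V → Prop) [DecidablePred p]
    (hp : ∀ o, p o ↔ ¬ ∃ u ∈ S, o = some u) :
    ∑ o : Option V, wgt net v o * (if p o then 1 else 0)
      = 1 - ∑ u ∈ S, net.w u v := by
  have h : ∀ o : Option V, wgt net v o * (if p o then 1 else 0)
      = wgt net v o - wgt net v o * (if ∃ u ∈ S, o = some u then 1 else 0) := by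
    intro o
    by_cases h : ∃ u ∈ S, o = some u
    · rw [if_neg (fun hp' => ((hp o).mp hp') h), if_pos h]; ring
    · rw [if_pos ((hp o).mpr h), if_neg h]; ring
  rw [Finset.sum_congr rfl (fun o _ => h o), Finset.sum_sub_distrib, sum_wgt_total,
    sum_wgt_mem net v S _ (fun o => Iff.rfl)]

lemma sum_wgt_diff (v : V) (S S' : Finset V) (hss : S' ⊆ S)
    (p : Option V → Prop) [DecidablePred p]
    (hp : ∀ o, p o ↔ (∃ u ∈ S, o = some u) ∧ ¬ (∃ u ∈ S', o = some u)) :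
    ∑ o : Option V, wgt net v o * (if p o then 1 else 0)
      = ∑ u ∈ S, net.w u v - ∑ u ∈ S', net.w u v := by
  have hco : ∀ o : Option V, (if p o then (1:ℝ) else 0)
      = if (∃ u ∈ S, o = some u) ∧ ¬ (∃ u ∈ S', o = some u) then 1 else 0 := by
    intro o
    by_cases h : p o
    · rw [if_pos h, if_pos ((hp o).mp h)]
    · rw [if_neg h, if_neg (fun hh => h ((hp o).mpr hh))]
  simp only [hco]
  rw [Fintype.sum_option]
  have hnone : (if (∃ u ∈ S, (none : Option V) = some u) ∧
      ¬ (∃ u ∈ S', (none : Option V) = some u) then (1:ℝ) else 0) = 0 := by simp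
  have hsome : ∀ u : V, (if (∃ u' ∈ S, (some u : Option V) = some u') ∧
      ¬ (∃ u' ∈ S', (some u : Option V) = some u') then (1:ℝ) else 0)
      = if u ∈ S \ S' then 1 else 0 := by
    intro u; congr 1; simp [eq_comm, Finset.mem_sdiff]
  simp only [hnone, hsome, mul_zero, zero_add, wgt, Option.elim, mul_ite, mul_one, mul_zero]
  rw [Finset.sum_ite_mem, Finset.univ_inter, Finset.sum_sdiff_eq_sub hss]

lemma core_eq (I : Finset V) (T : ℕ → Finset V)
    (hchain : ∀ i < Fintype.card V, T i ⊆ T (i + 1)) (v : V) :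
    (mu0 {x | CondT net I T v x}).toReal
      = ∑ o : Option V, wgt net v o * (if CondG I T v o then 1 else 0) := by
  classical
  have hn : 0 < Fintype.card V := Fintype.card_pos_iff.mpr ⟨net.s⟩
  have hc0 : ∀ i, (0:ℝ) ≤ ∑ u ∈ T i, net.w u v := fun i => sum_w_nonneg net v (T i)
  have hc1 : ∀ i, ∑ u ∈ T i, net.w u v ≤ 1 := fun i => sum_w_le_one net v (T i)
  have hcmono : ∀ i j, i ≤ j → j ≤ Fintype.card V →
      ∑ u ∈ T i, net.w u v ≤ ∑ u ∈ T j, net.w u v :=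
    fun i j hij hj => sum_w_mono net v (chain_mono hchain hij hj)
  have hqgmono : ∀ (o : Option V) i j, i ≤ j → j < Fintype.card V →
      (∃ u ∈ T i, o = some u) → (∃ u ∈ T j, o = some u) := by
    rintro o i j hij hj ⟨u, hu, ho⟩
    exact ⟨u, chain_mono hchain hij (by omega) hu, ho⟩
  by_cases hv0 : v ∈ T 0
  · -- v is already a friend initially
    have hT : {x | CondT net I T v x} = Set.univ :=
      Set.eq_univ_of_forall fun x => condAux_of_mem0 hchain hv0 _
    have hG : ∀ o : Option V, CondG I T v o := fun o => condAux_of_mem0 hchain hv0 _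
    rw [hT, mu0_univ]
    simp only [hG, if_true, mul_one]
    exact (sum_wgt_total net v).symm
  by_cases hI : v ∈ I
  swap
  · -- v is not invited
    by_cases hall : ∀ i < Fintype.card V, v ∉ T (i + 1)
    · have hT : {x | CondT net I T v x} = Set.univ :=
        Set.eq_univ_of_forall fun x => condAux_notI_all hv0 hI hall _
      have hG : ∀ o : Option V, CondG I T v o := fun o => condAux_notI_all hv0 hI hall _
      rw [hT, mu0_univ]
      simp only [hG, if_true, mul_one]
      exact (sum_wgt_total net v).symm
    · push_neg at hall
      have hT : {x | CondT net I T v x} = ∅ :=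
        Set.eq_empty_of_forall_notMem fun x => condAux_notI_ex hv0 hI hall _
      have hG : ∀ o : Option V, ¬ CondG I T v o := fun o => condAux_notI_ex hv0 hI hall _
      rw [hT]
      simp [hG]
  · -- v is invited and not initially a friend
    by_cases hall : ∀ i < Fintype.card V, v ∉ T (i + 1)
    · -- v never becomes a friend
      have hT : {x | CondT net I T v x}
          = {x | (∑ u ∈ T (Fintype.card V - 1), net.w u v) < x} := by
        ext x
        simp only [Set.mem_setOf_eq, CondT]
        rw [condAux_never hv0 hI hall
          (fun i j hij hj hq => le_trans hq (hcmono i j hij (by omega))) hn]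
        exact not_le
      rw [hT, mu0_Ioi (hc0 _) (hc1 _)]
      have hG : ∀ o : Option V, CondG I T v o ↔
          ¬ ∃ u ∈ T (Fintype.card V - 1), o = some u := fun o =>
        condAux_never hv0 hI hall (fun i j hij hj => hqgmono o i j hij hj) hn
      rw [sum_wgt_notMem net v _ _ hG]
    · push_neg at hall
      obtain ⟨k, hk, hvk1, hmin⟩ :
          ∃ k, k < Fintype.card V ∧ v ∈ T (k + 1) ∧ ∀ j < k, v ∉ T (j + 1) := by
        have hex' : ∃ i, i < Fintype.card V ∧ v ∈ T (i + 1) := by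
          obtain ⟨i, hi, hv⟩ := hall; exact ⟨i, hi, hv⟩
        have hks := Nat.find_spec hex'
        exact ⟨Nat.find hex', hks.1, hks.2,
          fun j hj hmem => Nat.find_min hex' hj ⟨hj.trans hks.1, hmem⟩⟩
      have hTiff : ∀ x : ℝ, CondT net I T v x ↔
          (x ≤ ∑ u ∈ T k, net.w u v ∧ ∀ j < k, ¬ x ≤ ∑ u ∈ T j, net.w u v) :=
        fun x => condAux_enter hchain hv0 hI hk hvk1 hmin
      have hGiff : ∀ o : Option V, CondG I T v o ↔
          ((∃ u ∈ T k, o = some u) ∧ ∀ j < k, ¬ ∃ u ∈ T j, o = some u) :=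
        fun o => condAux_enter hchain hv0 hI hk hvk1 hmin
      match hk0 : k, hk, hvk1, hmin, hTiff, hGiff with
      | 0, hk, hvk1, hmin, hTiff, hGiff =>
        have hT : {x | CondT net I T v x} = {x | x ≤ ∑ u ∈ T 0, net.w u v} := by
          ext x
          simp only [Set.mem_setOf_eq]
          rw [hTiff x]
          simp
        rw [hT, mu0_Iic (hc0 0) (hc1 0)]
        have hG : ∀ o : Option V, CondG I T v o ↔ ∃ u ∈ T 0, o = some u := by
          intro o
          rw [hGiff o]
          simp
        rw [sum_wgt_mem net v _ _ hG]
      | m + 1, hk, hvk1, hmin, hTiff, hGiff =>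
        have hmn : m + 1 < Fintype.card V := hk
        have hT : {x | CondT net I T v x}
            = {x | (∑ u ∈ T m, net.w u v) < x ∧ x ≤ ∑ u ∈ T (m + 1), net.w u v} := by
          ext x
          simp only [Set.mem_setOf_eq]
          rw [hTiff x]
          constructor
          · rintro ⟨h1, h2⟩
            exact ⟨not_le.mp (h2 m (by omega)), h1⟩
          · rintro ⟨h1, h2⟩
            refine ⟨h2, fun j hj => not_le.mpr (lt_of_le_of_lt ?_ h1)⟩
            exact hcmono j m (by omega) (by omega)
        rw [hT, mu0_Ioc (hc0 m) (hcmono m (m + 1) (by omega) (by omega)) (hc1 (m + 1))]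
        have hG : ∀ o : Option V, CondG I T v o ↔
            ((∃ u ∈ T (m + 1), o = some u) ∧ ¬ ∃ u ∈ T m, o = some u) := by
          intro o
          rw [hGiff o]
          constructor
          · rintro ⟨h1, h2⟩
            exact ⟨h1, h2 m (by omega)⟩
          · rintro ⟨h1, h2⟩
            refine ⟨h1, fun j hj hex => h2 (hqgmono o j m (by omega) (by omega) hex)⟩
        rw [sum_wgt_diff net v _ _ (hchain m (by omega : m < Fintype.card V)) _ hG]

end Core

section Glue1

open scoped Classical

variable (net : FriendNet V) (I : Finset V)

lemma mem_Cstep (θ : V → ℝ) (C : Finset V) (v : V) :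
    v ∈ net.Cstep θ I C ↔ v ∈ C ∨ ((v ∈ I ∧ v ∉ C) ∧ θ v ≤ ∑ u ∈ C, net.w u v) := by
  classical
  simp only [FriendNet.Cstep, FriendNet.Phi, Finset.mem_union, Finset.mem_inter,
    Finset.mem_filter, Finset.mem_univ, true_and]
  tauto

lemma mem_Hstep (g : V → Option V) (H : Finset V) (v : V) :
    v ∈ FriendNet.Hstep g I H ↔ v ∈ H ∨ ((v ∈ I ∧ v ∉ H) ∧ ∃ u ∈ H, g v = some u) := by
  classical
  simp only [FriendNet.Hstep, FriendNet.Psi, Finset.mem_union, Finset.mem_inter,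
    Finset.mem_filter, Finset.mem_univ, true_and]
  tauto

lemma Ctraj_iff (θ : V → ℝ) (T : ℕ → Finset V) :
    (∀ i ≤ Fintype.card V, (net.Cstep θ I)^[i] (net.Nbr net.s) = T i) ↔
      (T 0 = net.Nbr net.s ∧ ∀ v, CondT net I T v (θ v)) := by
  constructor
  · intro h
    refine ⟨((h 0 (Nat.zero_le _)).symm.trans (Function.iterate_zero_apply _ _)), ?_⟩
    intro v i hi
    have h1 := h i (le_of_lt hi)
    have h2 := h (i + 1) hi
    rw [Function.iterate_succ_apply', h1] at h2
    rw [← h2, mem_Cstep]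
  · rintro ⟨h0, hc⟩
    intro i hi
    induction i with
    | zero => simpa using h0.symm
    | succ m ih =>
      rw [Function.iterate_succ_apply', ih (by omega)]
      ext v
      rw [mem_Cstep]
      exact ((hc v) m (by omega)).symm

lemma Htraj_iff (g : V → Option V) (T : ℕ → Finset V) :
    (∀ i ≤ Fintype.card V, (FriendNet.Hstep g I)^[i] (net.Nbr net.s) = T i) ↔
      (T 0 = net.Nbr net.s ∧ ∀ v, CondG I T v (g v)) := by
  constructor
  · intro h
    refine ⟨((h 0 (Nat.zero_le _)).symm.trans (Function.iterate_zero_apply _ _)), ?_⟩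
    intro v i hi
    have h1 := h i (le_of_lt hi)
    have h2 := h (i + 1) hi
    rw [Function.iterate_succ_apply', h1] at h2
    rw [← h2, mem_Hstep]
  · rintro ⟨h0, hc⟩
    intro i hi
    induction i with
    | zero => simpa using h0.symm
    | succ m ih =>
      rw [Function.iterate_succ_apply', ih (by omega)]
      ext v
      rw [mem_Hstep]
      exact ((hc v) m (by omega)).symm

lemma measurable_CondT (T : ℕ → Finset V) (v : V) :
    MeasurableSet {x : ℝ | CondT net I T v x} := by
  have h : {x : ℝ | CondT net I T v x}
      = ⋂ (i : ℕ), ⋂ (_ : i < Fintype.card V),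
          {x : ℝ | v ∈ T (i + 1) ↔ v ∈ T i ∨
            ((v ∈ I ∧ v ∉ T i) ∧ x ≤ ∑ u ∈ T i, net.w u v)} := by
    ext x
    simp only [Set.mem_setOf_eq, Set.mem_iInter]
    exact Iff.rfl
  rw [h]
  exact MeasurableSet.iInter fun i => MeasurableSet.iInter fun _ =>
    measurableSet_iffCond _ _ _ _

/-- trajectory of the threshold process, as a finitely-indexed tuple -/
noncomputable def CTraj (θ : V → ℝ) : Fin (Fintype.card V + 1) → Finset V :=
  fun i => (net.Cstep θ I)^[i.1] (net.Nbr net.s)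

/-- trajectory of Process 2 -/
def HTraj (g : V → Option V) : Fin (Fintype.card V + 1) → Finset V :=
  fun i => (FriendNet.Hstep g I)^[i.1] (net.Nbr net.s)

/-- ℕ-indexed accessor for a tuple of sets -/
def tj (T : Fin (Fintype.card V + 1) → Finset V) : ℕ → Finset V :=
  fun i => T ⟨min i (Fintype.card V), by omega⟩

lemma tj_eq (T : Fin (Fintype.card V + 1) → Finset V) {i : ℕ} (hi : i ≤ Fintype.card V) :
    tj T i = T ⟨i, by omega⟩ := by
  simp only [tj]
  congr 1
  exact Fin.ext (by simp [Nat.min_eq_left hi])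

lemma CTraj_eq_iff (θ : V → ℝ) (T : Fin (Fintype.card V + 1) → Finset V) :
    CTraj net I θ = T ↔
      (tj T 0 = net.Nbr net.s ∧ ∀ v, CondT net I (tj T) v (θ v)) := by
  rw [← Ctraj_iff]
  constructor
  · intro h i hi
    rw [tj_eq T hi, ← h]
    rfl
  · intro h
    funext i
    have := h i.1 (by omega)
    rw [tj_eq T (by omega : i.1 ≤ Fintype.card V)] at this
    simpa [CTraj] using this

lemma HTraj_eq_iff (g : V → Option V) (T : Fin (Fintype.card V + 1) → Finset V) :
    HTraj net I g = T ↔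
      (tj T 0 = net.Nbr net.s ∧ ∀ v, CondG I (tj T) v (g v)) := by
  rw [← Htraj_iff]
  constructor
  · intro h i hi
    rw [tj_eq T hi, ← h]
    rfl
  · intro h
    funext i
    have := h i.1 (by omega)
    rw [tj_eq T (by omega : i.1 ≤ Fintype.card V)] at this
    simpa [HTraj] using this

end Glue1

set_option maxHeartbeats 2000000 in
open scoped Classical in
/-- Lemma 1: for every invitation set `I ⊆ V`, the acceptance
probability over the thresholds that `t ∈ C_∞(I)` equals the probability, over a random
realization `ĝ`, that `t ∈ H_∞(ĝ, I)`, i.e. `f(I) = E[f(ĝ, I)]`. -/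
theorem acceptance_prob_eq_expected_realization (net : FriendNet V) (I : Finset V) :
    net.f I =
      ∑ g : V → Option V,
        net.realWeight g * (if net.t ∈ net.Hinf g I then (1 : ℝ) else 0) := by
  classical
  haveI hprob : IsProbabilityMeasure (FriendNet.thetaMeasure V) := by
    unfold FriendNet.thetaMeasure
    infer_instance
  -- Step 1: decompose the θ-event by trajectory
  have hA : {θ : V → ℝ | net.t ∈ net.Cinf θ I}
      = ⋃ T ∈ Finset.univ.filter
          (fun T : Fin (Fintype.card V + 1) → Finset V => net.t ∈ T (Fin.last _)),
        {θ : V → ℝ | CTraj net I θ = T} := by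
    ext θ
    simp only [Set.mem_setOf_eq, Set.mem_iUnion, Finset.mem_filter, Finset.mem_univ,
      true_and, exists_prop]
    constructor
    · intro h
      refine ⟨CTraj net I θ, ?_, rfl⟩
      simpa [CTraj, FriendNet.Cinf, Fin.val_last] using h
    · rintro ⟨T, hT, hTr⟩
      have h2 : net.t ∈ CTraj net I θ (Fin.last _) := by rw [hTr]; exact hT
      simpa [CTraj, FriendNet.Cinf, Fin.val_last] using h2
  have hpre : ∀ T : Fin (Fintype.card V + 1) → Finset V,
      {θ : V → ℝ | CTraj net I θ = T}
        = if tj T 0 = net.Nbr net.s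
            then Set.univ.pi (fun v => {x : ℝ | CondT net I (tj T) v x}) else ∅ := by
    intro T
    ext θ
    rw [Set.mem_setOf_eq, CTraj_eq_iff]
    by_cases h0 : tj T 0 = net.Nbr net.s
    · simp [h0, Set.mem_univ_pi]
    · simp [h0]
  have hmeasT : ∀ T, MeasurableSet {θ : V → ℝ | CTraj net I θ = T} := by
    intro T
    rw [hpre T]
    split
    · exact MeasurableSet.univ_pi fun v => measurable_CondT net I (tj T) v
    · exact MeasurableSet.empty
  have hdisj : (↑(Finset.univ.filter
      (fun T : Fin (Fintype.card V + 1) → Finset V => net.t ∈ T (Fin.last _))) :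
      Set (Fin (Fintype.card V + 1) → Finset V)).PairwiseDisjoint
      (fun T => {θ : V → ℝ | CTraj net I θ = T}) := by
    intro T1 _ T2 _ hne
    refine Set.disjoint_left.mpr ?_
    rintro θ h1 h2
    exact hne ((h1 : CTraj net I θ = T1).symm.trans (h2 : CTraj net I θ = T2))
  have hsum1 : FriendNet.thetaMeasure V {θ : V → ℝ | net.t ∈ net.Cinf θ I}
      = ∑ T ∈ Finset.univ.filter (fun T : Fin (Fintype.card V + 1) → Finset V =>
          net.t ∈ T (Fin.last _)),
        FriendNet.thetaMeasure V {θ : V → ℝ | CTraj net I θ = T} := by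
    rw [hA]
    exact measure_biUnion_finset hdisj (fun T _ => hmeasT T)
  have hval : ∀ T : Fin (Fintype.card V + 1) → Finset V,
      FriendNet.thetaMeasure V {θ : V → ℝ | CTraj net I θ = T}
        = if tj T 0 = net.Nbr net.s
            then ∏ v : V, mu0 {x : ℝ | CondT net I (tj T) v x} else 0 := by
    intro T
    rw [hpre T]
    by_cases h0 : tj T 0 = net.Nbr net.s
    · rw [if_pos h0, if_pos h0]
      exact MeasureTheory.Measure.pi_pi _ _
    · rw [if_neg h0, if_neg h0]
      exact measure_empty
  have hLHS : net.f I
      = ∑ T : Fin (Fintype.card V + 1) → Finset V,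
          (if net.t ∈ T (Fin.last _) then
            (if tj T 0 = net.Nbr net.s
              then ∏ v : V, (mu0 {x : ℝ | CondT net I (tj T) v x}).toReal else 0)
            else 0) := by
    unfold FriendNet.f
    rw [hsum1, ENNReal.toReal_sum (fun T _ => measure_ne_top _ _), Finset.sum_filter]
    refine Finset.sum_congr rfl fun T _ => ?_
    by_cases ht : net.t ∈ T (Fin.last _)
    · rw [if_pos ht, if_pos ht, hval T]
      by_cases h0 : tj T 0 = net.Nbr net.s
      · rw [if_pos h0, if_pos h0, ENNReal.toReal_prod]
      · rw [if_neg h0, if_neg h0]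
        rfl
    · rw [if_neg ht, if_neg ht]
  -- Step 2: the realization side
  have h1 : ∀ g : V → Option V, (if net.t ∈ net.Hinf g I then (1:ℝ) else 0)
      = ∑ T : Fin (Fintype.card V + 1) → Finset V,
          (if HTraj net I g = T then
            (if net.t ∈ T (Fin.last _) then (1:ℝ) else 0) else 0) := by
    intro g
    rw [Finset.sum_ite_eq Finset.univ (HTraj net I g)
      (fun T => if net.t ∈ T (Fin.last _) then (1:ℝ) else 0)]
    simp only [Finset.mem_univ, if_true]
    have h2 : net.t ∈ net.Hinf g I ↔ net.t ∈ HTraj net I g (Fin.last _) := by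
      simp [HTraj, FriendNet.Hinf, Fin.val_last]
    by_cases h : net.t ∈ net.Hinf g I
    · rw [if_pos h, if_pos (h2.mp h)]
    · rw [if_neg h, if_neg (fun hh => h (h2.mpr hh))]
  have h2 : ∀ T : Fin (Fintype.card V + 1) → Finset V,
      (∑ g : V → Option V, net.realWeight g * (if HTraj net I g = T then (1:ℝ) else 0))
        = if tj T 0 = net.Nbr net.s
            then ∏ v : V, ∑ o : Option V,
              wgt net v o * (if CondG I (tj T) v o then (1:ℝ) else 0)
            else 0 := by
    intro T
    by_cases h0 : tj T 0 = net.Nbr net.s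
    · rw [if_pos h0]
      have hg : ∀ g : V → Option V, (if HTraj net I g = T then (1:ℝ) else 0)
          = ∏ v : V, (if CondG I (tj T) v (g v) then (1:ℝ) else 0) := by
        intro g
        rw [Finset.prod_boole]
        by_cases h : HTraj net I g = T
        · rw [if_pos h, if_pos (fun v _ => ((HTraj_eq_iff net I g T).mp h).2 v)]
        · rw [if_neg h, if_neg (fun hall => h ((HTraj_eq_iff net I g T).mpr
            ⟨h0, fun v => hall v (Finset.mem_univ v)⟩))]
      calc ∑ g : V → Option V, net.realWeight g * (if HTraj net I g = T then (1:ℝ) else 0)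
          = ∑ g : V → Option V, ∏ v : V,
              (wgt net v (g v) * (if CondG I (tj T) v (g v) then (1:ℝ) else 0)) := by
            refine Finset.sum_congr rfl fun g _ => ?_
            rw [hg g, Finset.prod_mul_distrib]
            rfl
        _ = ∑ g ∈ Fintype.piFinset (fun _ : V => (Finset.univ : Finset (Option V))),
              ∏ v : V, (wgt net v (g v) * (if CondG I (tj T) v (g v) then (1:ℝ) else 0)) := by
            rw [Fintype.piFinset_univ]
        _ = ∏ v : V, ∑ o : Option V,
              wgt net v o * (if CondG I (tj T) v o then (1:ℝ) else 0) :=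
            (Finset.prod_univ_sum (fun _ : V => (Finset.univ : Finset (Option V)))
              (fun v o => wgt net v o * (if CondG I (tj T) v o then (1:ℝ) else 0))).symm
    · rw [if_neg h0]
      refine Finset.sum_eq_zero fun g _ => ?_
      rw [if_neg (fun h => h0 ((HTraj_eq_iff net I g T).mp h).1), mul_zero]
  have hRHS : (∑ g : V → Option V, net.realWeight g *
        (if net.t ∈ net.Hinf g I then (1:ℝ) else 0))
      = ∑ T : Fin (Fintype.card V + 1) → Finset V,
          (if net.t ∈ T (Fin.last _) then
            (if tj T 0 = net.Nbr net.s
              then ∏ v : V, ∑ o : Option V,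
                wgt net v o * (if CondG I (tj T) v o then (1:ℝ) else 0)
              else 0) else 0) := by
    calc (∑ g : V → Option V, net.realWeight g *
          (if net.t ∈ net.Hinf g I then (1:ℝ) else 0))
        = ∑ g : V → Option V, ∑ T : Fin (Fintype.card V + 1) → Finset V,
            net.realWeight g * (if HTraj net I g = T then
              (if net.t ∈ T (Fin.last _) then (1:ℝ) else 0) else 0) := by
          refine Finset.sum_congr rfl fun g _ => ?_
          rw [h1 g, Finset.mul_sum]
      _ = ∑ T : Fin (Fintype.card V + 1) → Finset V, ∑ g : V → Option V,
            net.realWeight g * (if HTraj net I g = T then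
              (if net.t ∈ T (Fin.last _) then (1:ℝ) else 0) else 0) := Finset.sum_comm
      _ = ∑ T : Fin (Fintype.card V + 1) → Finset V,
            (if net.t ∈ T (Fin.last _) then (1:ℝ) else 0) *
              ∑ g : V → Option V, net.realWeight g *
                (if HTraj net I g = T then (1:ℝ) else 0) := by
          refine Finset.sum_congr rfl fun T _ => ?_
          rw [Finset.mul_sum]
          refine Finset.sum_congr rfl fun g _ => ?_
          by_cases h : HTraj net I g = T <;>
            by_cases ht : net.t ∈ T (Fin.last _) <;> simp [h, ht] <;> ring
      _ = ∑ T : Fin (Fintype.card V + 1) → Finset V,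
          (if net.t ∈ T (Fin.last _) then
            (if tj T 0 = net.Nbr net.s
              then ∏ v : V, ∑ o : Option V,
                wgt net v o * (if CondG I (tj T) v o then (1:ℝ) else 0)
              else 0) else 0) := by
          refine Finset.sum_congr rfl fun T _ => ?_
          rw [h2 T]
          by_cases ht : net.t ∈ T (Fin.last _) <;> simp [ht]
  -- Step 3: match termwise
  rw [hLHS, hRHS]
  refine Finset.sum_congr rfl fun T _ => ?_
  by_cases ht : net.t ∈ T (Fin.last _)
  swap
  · rw [if_neg ht, if_neg ht]
  rw [if_pos ht, if_pos ht]
  by_cases h0 : tj T 0 = net.Nbr net.s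
  swap
  · rw [if_neg h0, if_neg h0]
  rw [if_pos h0, if_pos h0]
  by_cases hch : ∀ i < Fintype.card V, tj T i ⊆ tj T (i + 1)
  · exact Finset.prod_congr rfl fun v _ => core_eq net I (tj T) hch v
  · push_neg at hch
    obtain ⟨i, hi, hns⟩ := hch
    obtain ⟨u, hu1, hu2⟩ := Finset.not_subset.mp hns
    have hnc : ∀ q : ℕ → Prop, ¬ CondAux I (tj T) u q := fun q => condAux_broken hi hu1 hu2
    have hz1 : (mu0 {x : ℝ | CondT net I (tj T) u x}).toReal = 0 := by
      rw [show ({x : ℝ | CondT net I (tj T) u x}) = ∅ from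
        Set.eq_empty_of_forall_notMem fun x => hnc _, measure_empty]
      rfl
    have hz2 : (∑ o : Option V, wgt net u o *
        (if CondG I (tj T) u o then (1:ℝ) else 0)) = 0 := by
      refine Finset.sum_eq_zero fun o _ => ?_
      rw [if_neg (show ¬ CondG I (tj T) u o from hnc _), mul_zero]
    rw [Finset.prod_eq_zero (Finset.mem_univ u) hz1,
      Finset.prod_eq_zero (Finset.mem_univ u) hz2]
end

section
/- For every realization g and every invitation set I ⊆ V, the target t belongs to H_∞(g,I) (i.e., t can become a friend of s in realization g under the invitation set I) if and only if I covers g, that is, t(g) ⊆ I. -/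
open Finset MeasureTheory

variable {V : Type} [Fintype V] [DecidableEq V]

/-- Auxiliary predicate: `Ok g Ns I n v` means there is a `g`-chain of length at most
`n` from `v` into `Ns`, with all intermediate users (including `v`) in `I`. -/
def Ok (g : V → Option V) (Ns I : Finset V) : ℕ → V → Prop
  | 0, v => v ∈ Ns
  | n + 1, v => v ∈ Ns ∨ (v ∈ I ∧ ∃ w, g v = some w ∧ Ok g Ns I n w)

lemma ok_of_mem {g : V → Option V} {Ns I : Finset V} {v : V} (h : v ∈ Ns) :
    ∀ n, Ok g Ns I n v
  | 0 => h
  | _ + 1 => Or.inl h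

lemma ok_succ {g : V → Option V} {Ns I : Finset V} :
    ∀ {n : ℕ} {v : V}, Ok g Ns I n v → Ok g Ns I (n + 1) v
  | 0, _, h => Or.inl h
  | n + 1, _, h => by
    rcases h with h | ⟨hI, w, hw, ho⟩
    · exact Or.inl h
    · exact Or.inr ⟨hI, w, hw, ok_succ ho⟩

lemma ok_mem_I {g : V → Option V} {Ns I : Finset V} {v : V} {n : ℕ}
    (h : Ok g Ns I n v) (hv : v ∉ Ns) : v ∈ I := by
  cases n with
  | zero => exact absurd h hv
  | succ n => rcases h with h | ⟨hI, _⟩ <;> [exact absurd h hv; exact hI]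

lemma mem_iterate_iff {g : V → Option V} {Ns I : Finset V} :
    ∀ (m : ℕ) (v : V), v ∈ (FriendNet.Hstep g I)^[m] Ns ↔ Ok g Ns I m v := by
  intro m
  induction m with
  | zero => intro v; simp [Ok]
  | succ m ih =>
    intro v
    rw [Function.iterate_succ_apply']
    simp only [FriendNet.Hstep, FriendNet.Psi, Finset.mem_union, Finset.mem_inter,
      Finset.mem_filter, Finset.mem_univ, true_and]
    constructor
    · rintro (h | ⟨⟨hv, u, hu, hgu⟩, hvI⟩)
      · exact ok_succ ((ih v).1 h)
      · exact Or.inr ⟨hvI, u, hgu, (ih u).1 hu⟩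
    · rintro (h | ⟨hvI, w, hw, ho⟩)
      · exact Or.inl ((ih v).2 (ok_of_mem h m))
      · by_cases hv : v ∈ (FriendNet.Hstep g I)^[m] Ns
        · exact Or.inl hv
        · exact Or.inr ⟨⟨hv, w, (ih w).2 ho, hw⟩, hvI⟩

lemma subset_traceAux (g : V → Option V) (Ns : Finset V) :
    ∀ (m : ℕ) (u : V) (acc : Finset (Option V)), acc ⊆ traceAux g Ns m u acc := by
  intro m
  induction m with
  | zero => intro u acc; rw [traceAux]
  | succ m ih =>
    intro u acc
    rw [traceAux]
    cases h : g u with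
    | none => exact Finset.subset_insert _ _
    | some v =>
      by_cases h1 : some v ∈ acc
      · simp only [h1, if_true]
        exact Finset.subset_insert _ _
      · by_cases h2 : v ∈ Ns
        · simp only [h1, h2, if_false, if_true]
          exact Finset.Subset.refl _
        · simp only [h1, h2, if_false]
          exact (Finset.subset_insert _ _).trans (ih v _)

lemma trace_subset_ok {g : V → Option V} {Ns I : Finset V} :
    ∀ (m : ℕ) (u : V) (acc : Finset (Option V)),
      some u ∈ acc → Fintype.card V + 1 ≤ acc.card + m →
      traceAux g Ns m u acc ⊆ I.image some →
      Ok g Ns I (Fintype.card V + 1 - acc.card) u := by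
  intro m
  induction m with
  | zero =>
    intro u acc hu hcard hsub
    rw [traceAux] at hsub
    have h1 : acc.card ≤ Fintype.card V :=
      (Finset.card_le_card hsub).trans
        ((Finset.card_image_le).trans (I.card_le_univ.trans_eq Finset.card_univ))
    omega
  | succ m ih =>
    intro u acc hu hcard hsub
    rw [traceAux] at hsub
    have hacc : acc ⊆ I.image some := by
      intro x hx
      apply hsub
      cases h : g u with
      | none => exact Finset.mem_insert_of_mem hx
      | some v =>
        by_cases h1 : some v ∈ acc
        · simp only [h1, if_true]; exact Finset.mem_insert_of_mem hx
        · by_cases h2 : v ∈ Ns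
          · simp only [h1, h2, if_false, if_true]; exact hx
          · simp only [h1, h2, if_false]
            exact subset_traceAux g Ns m v _ (Finset.mem_insert_of_mem hx)
    have hcardle : acc.card ≤ Fintype.card V :=
      (Finset.card_le_card hacc).trans
        ((Finset.card_image_le).trans (I.card_le_univ.trans_eq Finset.card_univ))
    have huI : u ∈ I := by
      obtain ⟨x, hxI, hx⟩ := Finset.mem_image.1 (hacc hu)
      rwa [← Option.some_inj.1 hx]
    have hstep : Fintype.card V + 1 - acc.card = (Fintype.card V - acc.card) + 1 := by
      omega
    cases h : g u with
    | none =>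
      rw [h] at hsub
      obtain ⟨x, _, hx⟩ := Finset.mem_image.1 (hsub (Finset.mem_insert_self _ _))
      exact absurd hx (by simp)
    | some v =>
      rw [h] at hsub
      by_cases h1 : some v ∈ acc
      · simp only [h1, if_true] at hsub
        obtain ⟨x, _, hx⟩ := Finset.mem_image.1 (hsub (Finset.mem_insert_self _ _))
        exact absurd hx (by simp)
      · by_cases h2 : v ∈ Ns
        · rw [hstep]
          exact Or.inr ⟨huI, v, h, ok_of_mem h2 _⟩
        · simp only [h1, h2, if_false] at hsub
          have hv : Ok g Ns I (Fintype.card V + 1 - (insert (some v) acc).card) v :=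
            ih v (insert (some v) acc) (Finset.mem_insert_self _ _)
              (by rw [Finset.card_insert_of_notMem h1]; omega) hsub
          rw [Finset.card_insert_of_notMem h1] at hv
          rw [hstep]
          refine Or.inr ⟨huI, v, h, ?_⟩
          have : Fintype.card V + 1 - (acc.card + 1) = Fintype.card V - acc.card := by omega
          rwa [this] at hv

lemma ok_trace_subset {g : V → Option V} {Ns I : Finset V} :
    ∀ (m : ℕ) (u : V) (acc : Finset (Option V)),
      (∃ n, Ok g Ns I n u) →
      sInf {n | Ok g Ns I n u} < m →
      u ∉ Ns →
      acc ⊆ I.image some →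
      (∀ x : V, some x ∈ acc → (∃ n, Ok g Ns I n x) ∧
        sInf {n | Ok g Ns I n u} ≤ sInf {n | Ok g Ns I n x}) →
      traceAux g Ns m u acc ⊆ I.image some := by
  intro m
  induction m with
  | zero => intro u acc _ hlt; omega
  | succ m ih =>
    intro u acc hex hlt hns hacc hinv
    have hd : Ok g Ns I (sInf {n | Ok g Ns I n u}) u := Nat.sInf_mem hex
    cases hd0 : sInf {n | Ok g Ns I n u} with
    | zero => rw [hd0] at hd; exact absurd hd hns
    | succ k =>
      rw [hd0] at hd
      rcases hd with hd | ⟨huI, w, hgw, hok⟩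
      · exact absurd hd hns
      · rw [traceAux, hgw]
        by_cases h1 : some w ∈ acc
        · exfalso
          have h2 := (hinv w h1).2
          have h3 : sInf {n | Ok g Ns I n w} ≤ k := Nat.sInf_le hok
          omega
        · by_cases h2 : w ∈ Ns
          · simp only [h1, h2, if_false, if_true]; exact hacc
          · simp only [h1, h2, if_false]
            have hwlt : sInf {n | Ok g Ns I n w} ≤ k := Nat.sInf_le hok
            refine ih w (insert (some w) acc) ⟨k, hok⟩ (by omega) h2 ?_ ?_
            · intro x hx
              rcases Finset.mem_insert.1 hx with hx | hx
              · rw [hx]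
                exact Finset.mem_image.2 ⟨w, ok_mem_I hok h2, rfl⟩
              · exact hacc hx
            · intro x hx
              rcases Finset.mem_insert.1 hx with hx | hx
              · rw [Option.some_inj.1 hx]
                exact ⟨⟨k, hok⟩, le_refl _⟩
              · obtain ⟨hx1, hx2⟩ := hinv x hx
                exact ⟨hx1, by omega⟩

/-- Lemma 2: for every realization `g` and every invitation set
`I ⊆ V`, `t ∈ H_∞(g, I)` if and only if `I` covers `g`, i.e. `t(g) ⊆ I`. -/
theorem target_friended_iff_covers (net : FriendNet V) (g : V → Option V)
    (hg : net.IsRealization g) (I : Finset V) :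
    net.t ∈ net.Hinf g I ↔ net.trace g ⊆ I.image some := by
  have hNt : net.t ∉ net.Nbr net.s := by
    simp only [FriendNet.Nbr, Finset.mem_filter, Finset.mem_univ, true_and]
    exact fun h => net.t_not_friend (net.G.adj_symm h)
  rw [FriendNet.Hinf, FriendNet.trace]
  rw [mem_iterate_iff]
  constructor
  · intro h
    refine ok_trace_subset (Fintype.card V + 1) net.t {some net.t} ⟨_, h⟩
      (Nat.lt_succ_of_le (Nat.sInf_le h)) hNt ?_ ?_
    · intro x hx
      rw [Finset.mem_singleton] at hx
      rw [hx]
      exact Finset.mem_image.2 ⟨net.t, ok_mem_I h hNt, rfl⟩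
    · intro x hx
      rw [Finset.mem_singleton, Option.some_inj] at hx
      subst hx
      exact ⟨⟨_, h⟩, le_refl _⟩
  · intro h
    have := trace_subset_ok (g := g) (Ns := net.Nbr net.s) (I := I)
      (Fintype.card V + 1) net.t {some net.t} (Finset.mem_singleton_self _)
      (by rw [Finset.card_singleton]; omega) h
    rw [Finset.card_singleton] at this
    simpa using this
end

section
/- For every invitation set I ⊆ V, the acceptance probability admits the explicit formula f(I) = Σ_{g∈𝒢} Pr[g]·f(g,I), where 𝒢 is the set of all realizations and f(g,I) = 1 if t(g) ⊆ I and f(g,I) = 0 otherwise. -/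
open Finset MeasureTheory

variable {V : Type} [Fintype V] [DecidableEq V]

-- ===================== auxiliary development =====================

namespace FriendNet
variable (net : FriendNet V)

lemma w_nonneg (u v : V) : 0 ≤ net.w u v := by
  by_cases h : net.G.Adj u v
  · exact (net.w_pos u v h).le
  · exact le_of_eq (net.w_eq_zero u v h).symm

noncomputable def wt (u : V) (o : Option V) : ℝ :=
  o.elim (1 - ∑ v : V, net.w v u) (fun v => net.w v u)

noncomputable def WW (A : Finset V) (u : V) : ℝ := ∑ v ∈ A, net.w v u

lemma WW_nonneg (A : Finset V) (u : V) : 0 ≤ net.WW A u :=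
  Finset.sum_nonneg fun v _ => net.w_nonneg v u

lemma WW_mono {A B : Finset V} (h : A ⊆ B) (u : V) : net.WW A u ≤ net.WW B u :=
  Finset.sum_le_sum_of_subset_of_nonneg h fun v _ _ => net.w_nonneg v u

lemma WW_le_one (A : Finset V) (u : V) : net.WW A u ≤ 1 :=
  le_trans (net.WW_mono (Finset.subset_univ A) u) (net.w_sum_le_one u)

lemma wt_nonneg (u : V) (o : Option V) : 0 ≤ net.wt u o := by
  cases o with
  | none =>
    have := net.w_sum_le_one u
    simp only [wt, Option.elim]
    linarith
  | some v => exact net.w_nonneg v u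

lemma sum_wt (u : V) : ∑ o : Option V, net.wt u o = 1 := by
  rw [Fintype.sum_option]
  simp only [wt, Option.elim]
  ring

lemma sum_ite_w (u : V) (P : V → Prop) [DecidablePred P] :
    ∑ v : V, (if P v then net.w v u else 0) = ∑ v ∈ Finset.univ.filter P, net.w v u := by
  rw [Finset.sum_filter]

lemma sum_wt_not_mem (u : V) (C : Finset V) :
    ∑ o : Option V, (if (∀ v ∈ C, o ≠ some v) then net.wt u o else 0)
      = 1 - net.WW C u := by
  classical
  rw [Fintype.sum_option]
  have hnone : (if (∀ v ∈ C, (none : Option V) ≠ some v) then net.wt u none else 0)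
      = 1 - ∑ v : V, net.w v u := by
    rw [if_pos (by simp)]; rfl
  have hsome : ∀ v : V, (if (∀ v' ∈ C, (some v : Option V) ≠ some v') then net.wt u (some v) else 0)
      = (if v ∉ C then net.w v u else 0) := by
    intro v
    congr 1
    · simp
  rw [hnone]
  rw [Finset.sum_congr rfl (fun v _ => hsome v)]
  have : ∑ v : V, (if v ∉ C then net.w v u else 0) = ∑ v : V, net.w v u - net.WW C u := by
    rw [eq_sub_iff_add_eq, WW]
    have h1 : ∑ v ∈ C, net.w v u = ∑ v : V, if v ∈ C then net.w v u else 0 := by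
      rw [Finset.sum_ite_mem, Finset.univ_inter]
    rw [h1, ← Finset.sum_add_distrib]
    apply Finset.sum_congr rfl
    intro v _
    by_cases hv : v ∈ C <;> simp [hv]
  rw [this]; ring

lemma sum_wt_mem_sdiff (u : V) (B C : Finset V) (hCB : C ⊆ B) :
    ∑ o : Option V, (if ((∃ v ∈ B, o = some v) ∧ ∀ v ∈ C, o ≠ some v) then net.wt u o else 0)
      = net.WW B u - net.WW C u := by
  classical
  rw [Fintype.sum_option]
  rw [if_neg (by simp)]
  have hsome : ∀ v : V, (if ((∃ v' ∈ B, (some v : Option V) = some v') ∧ ∀ v' ∈ C, (some v : Option V) ≠ some v') then net.wt u (some v) else 0)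
      = (if v ∈ B \ C then net.w v u else 0) := by
    intro v
    congr 1
    · simp [Finset.mem_sdiff]
  rw [Finset.sum_congr rfl (fun v _ => hsome v)]
  rw [Finset.sum_ite_mem, Finset.univ_inter, Finset.sum_sdiff_eq_sub hCB]
  rw [zero_add]; rfl


end FriendNet

section MeasHelpers

noncomputable def mu01 : Measure ℝ := volume.restrict (Set.Icc (0:ℝ) 1)

instance : IsProbabilityMeasure mu01 := by
  constructor
  simp [mu01, Real.volume_Icc]

lemma mu01_Iic {b : ℝ} (h0 : 0 ≤ b) (h1 : b ≤ 1) : (mu01 (Set.Iic b)).toReal = b := by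
  rw [mu01, Measure.restrict_apply measurableSet_Iic]
  have : Set.Iic b ∩ Set.Icc 0 1 = Set.Icc 0 b := by
    ext x
    simp only [Set.mem_inter_iff, Set.mem_Iic, Set.mem_Icc]
    constructor
    · rintro ⟨hx, hx0, _⟩; exact ⟨hx0, hx⟩
    · rintro ⟨hx0, hx⟩; exact ⟨hx, hx0, by linarith⟩
  rw [this, Real.volume_Icc, ENNReal.toReal_ofReal (by linarith)]
  ring

lemma mu01_Ioi {a : ℝ} (h0 : 0 ≤ a) (h1 : a ≤ 1) : (mu01 (Set.Ioi a)).toReal = 1 - a := by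
  rw [mu01, Measure.restrict_apply measurableSet_Ioi]
  have : Set.Ioi a ∩ Set.Icc 0 1 = Set.Ioc a 1 := by
    ext x
    simp only [Set.mem_inter_iff, Set.mem_Ioi, Set.mem_Icc, Set.mem_Ioc]
    constructor
    · rintro ⟨hx, _, hx1⟩; exact ⟨hx, hx1⟩
    · rintro ⟨hx, hx1⟩; exact ⟨hx, by linarith, hx1⟩
  rw [this, Real.volume_Ioc, ENNReal.toReal_ofReal (by linarith)]

lemma mu01_Ioc {a b : ℝ} (h0 : 0 ≤ a) (hab : a ≤ b) (h1 : b ≤ 1) :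
    (mu01 (Set.Ioc a b)).toReal = b - a := by
  rw [mu01, Measure.restrict_apply measurableSet_Ioc]
  have : Set.Ioc a b ∩ Set.Icc 0 1 = Set.Ioc a b := by
    apply Set.inter_eq_left.mpr
    rintro x ⟨hx1, hx2⟩
    exact ⟨by linarith, by linarith⟩
  rw [this, Real.volume_Ioc, ENNReal.toReal_ofReal (by linarith)]

lemma mu01_univ : (mu01 (Set.univ : Set ℝ)).toReal = 1 := by
  simp

end MeasHelpers

namespace FriendNet
variable (net : FriendNet V)

lemma core_lemma (I : Finset V) (u : V) (K : ℕ) (hK : 0 < K) (A : ℕ → Finset V)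
    (hmono : ∀ j, j + 1 ≤ K → A j ⊆ A (j + 1)) :
    (mu01 {x : ℝ | ∀ j < K, (u ∈ A (j + 1) ↔ u ∈ A j ∨ (u ∈ I ∧ x ≤ net.WW (A j) u))}).toReal
      = ∑ o : Option V,
          (if (∀ j < K, (u ∈ A (j + 1) ↔ u ∈ A j ∨ (u ∈ I ∧ ∃ v ∈ A j, o = some v)))
            then net.wt u o else 0) := by
  classical
  have hAmono : ∀ i j, i ≤ j → j ≤ K → A i ⊆ A j := by
    intro i j hij hjK
    induction j with
    | zero => simpa [Nat.le_zero.mp hij] using Finset.Subset.refl _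
    | succ j ih =>
      rcases Nat.eq_or_lt_of_le hij with rfl | hlt
      · exact Finset.Subset.refl _
      · exact (ih (by omega) (by omega)).trans (hmono j hjK)
  by_cases h0 : u ∈ A 0
  · -- u in A 0 : both sides 1
    have hall : ∀ j, j ≤ K → u ∈ A j := fun j hj => hAmono 0 j (by omega) hj h0
    have hS : {x : ℝ | ∀ j < K, (u ∈ A (j + 1) ↔ u ∈ A j ∨ (u ∈ I ∧ x ≤ net.WW (A j) u))}
        = Set.univ := by
      apply Set.eq_univ_of_forall
      intro x j hj
      exact iff_of_true (hall (j + 1) (by omega)) (Or.inl (hall j (by omega)))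
    rw [hS, mu01_univ]
    have : ∀ o : Option V,
        (if (∀ j < K, (u ∈ A (j + 1) ↔ u ∈ A j ∨ (u ∈ I ∧ ∃ v ∈ A j, o = some v)))
          then net.wt u o else 0) = net.wt u o := by
      intro o
      rw [if_pos]
      intro j hj
      exact iff_of_true (hall (j + 1) (by omega)) (Or.inl (hall j (by omega)))
    rw [Finset.sum_congr rfl (fun o _ => this o), net.sum_wt u]
  · by_cases hE : ∃ j, j ≤ K ∧ u ∈ A j
    · -- u enters at j0 ≥ 1
      set j0 := Nat.find hE with hj0def
      obtain ⟨hj0K, hj0mem⟩ := Nat.find_spec hE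
      have hbefore : ∀ j < j0, u ∉ A j := by
        intro j hj hmem
        exact Nat.find_min hE hj (⟨by omega, hmem⟩)
      have hj0pos : 0 < j0 := by
        rcases Nat.eq_zero_or_pos j0 with h | h
        · exact absurd (h ▸ hj0mem) h0
        · exact h
      have hafter : ∀ j, j0 ≤ j → j ≤ K → u ∈ A j := fun j h1 h2 => hAmono j0 j h1 h2 hj0mem
      set p := j0 - 1 with hpdef
      have hpK : p < K := by omega
      have hpsucc : p + 1 = j0 := by omega
      by_cases hI : u ∈ I
      · -- entry case with u ∈ I
        have hSchar : ∀ x : ℝ,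
            (∀ j < K, (u ∈ A (j + 1) ↔ u ∈ A j ∨ (u ∈ I ∧ x ≤ net.WW (A j) u)))
              ↔ (x ≤ net.WW (A p) u ∧ ∀ j < p, net.WW (A j) u < x) := by
          intro x
          constructor
          · intro h
            constructor
            · have := (h p hpK).mp (hafter (p + 1) (by omega) (by omega))
              rcases this with hc | ⟨_, hc⟩
              · exact absurd hc (hbefore p (by omega))
              · exact hc
            · intro j hj
              by_contra hcon
              push_neg at hcon
              have := (h j (by omega)).mpr (Or.inr ⟨hI, hcon⟩)
              exact hbefore (j + 1) (by omega) this
          · rintro ⟨hub, hlb⟩ j hj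
            rcases lt_trichotomy j p with hc | rfl | hc
            · apply iff_of_false (hbefore (j + 1) (by omega))
              rintro (hm | ⟨-, hx⟩)
              · exact hbefore j (by omega) hm
              · exact absurd hx (not_le.mpr (hlb j hc))
            · exact iff_of_true (hafter (p + 1) (by omega) (by omega)) (Or.inr ⟨hI, hub⟩)
            · exact iff_of_true (hafter (j + 1) (by omega) (by omega))
                (Or.inl (hafter j (by omega) (by omega)))
        have hTchar : ∀ o : Option V,
            (∀ j < K, (u ∈ A (j + 1) ↔ u ∈ A j ∨ (u ∈ I ∧ ∃ v ∈ A j, o = some v)))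
              ↔ ((∃ v ∈ A p, o = some v) ∧ ∀ j < p, ¬ ∃ v ∈ A j, o = some v) := by
          intro o
          constructor
          · intro h
            constructor
            · have := (h p hpK).mp (hafter (p + 1) (by omega) (by omega))
              rcases this with hc | ⟨_, hc⟩
              · exact absurd hc (hbefore p (by omega))
              · exact hc
            · intro j hj hcon
              have := (h j (by omega)).mpr (Or.inr ⟨hI, hcon⟩)
              exact hbefore (j + 1) (by omega) this
          · rintro ⟨hub, hlb⟩ j hj
            rcases lt_trichotomy j p with hc | rfl | hc
            · apply iff_of_false (hbefore (j + 1) (by omega))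
              rintro (hm | ⟨-, hx⟩)
              · exact hbefore j (by omega) hm
              · exact hlb j hc hx
            · exact iff_of_true (hafter (p + 1) (by omega) (by omega)) (Or.inr ⟨hI, hub⟩)
            · exact iff_of_true (hafter (j + 1) (by omega) (by omega))
                (Or.inl (hafter j (by omega) (by omega)))
        -- RHS rewrite: the exclusion set is A (p-1) when p ≥ 1, ∅ when p = 0
        set C : Finset V := if p = 0 then (∅ : Finset V) else A (p - 1) with hCdef
        have hCsub : C ⊆ A p := by
          rcases Nat.eq_zero_or_pos p with hp | hp
          · simp [hCdef, hp]
          · rw [hCdef, if_neg (by omega)]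
            exact hAmono (p - 1) p (by omega) (by omega)
        have hTchar2 : ∀ o : Option V,
            ((∃ v ∈ A p, o = some v) ∧ ∀ j < p, ¬ ∃ v ∈ A j, o = some v)
              ↔ ((∃ v ∈ A p, o = some v) ∧ ∀ v ∈ C, o ≠ some v) := by
          intro o
          apply and_congr_right
          intro _
          rcases Nat.eq_zero_or_pos p with hp | hp
          · simp [hCdef, hp]
          · rw [hCdef, if_neg (by omega)]
            constructor
            · intro h v hv he
              exact h (p - 1) (by omega) ⟨v, hv, he⟩
            · rintro h j hj ⟨v, hv, he⟩
              exact h v (hAmono j (p - 1) (by omega) (by omega) hv) he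
        have hRHS : ∑ o : Option V,
            (if (∀ j < K, (u ∈ A (j + 1) ↔ u ∈ A j ∨ (u ∈ I ∧ ∃ v ∈ A j, o = some v)))
              then net.wt u o else 0) = net.WW (A p) u - net.WW C u := by
          rw [← net.sum_wt_mem_sdiff u (A p) C hCsub]
          apply Finset.sum_congr rfl
          intro o _
          congr 1
          rw [eq_iff_iff]
          rw [hTchar o, hTchar2 o]
        rw [hRHS]
        have hWC : 0 ≤ net.WW C u := net.WW_nonneg C u
        have hWCp : net.WW C u ≤ net.WW (A p) u := net.WW_mono hCsub u
        have hWp1 : net.WW (A p) u ≤ 1 := net.WW_le_one (A p) u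
        rcases Nat.eq_zero_or_pos p with hp | hp
        · -- p = 0 : S = Iic
          have hS : {x : ℝ | ∀ j < K, (u ∈ A (j + 1) ↔ u ∈ A j ∨ (u ∈ I ∧ x ≤ net.WW (A j) u))}
              = Set.Iic (net.WW (A p) u) := by
            ext x
            rw [Set.mem_setOf_eq, hSchar x, Set.mem_Iic]
            constructor
            · exact fun h => h.1
            · exact fun h => ⟨h, fun j hj => by omega⟩
          rw [hS, mu01_Iic (net.WW_nonneg _ u) hWp1]
          have : net.WW C u = 0 := by rw [hCdef, if_pos hp, WW, Finset.sum_empty]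
          rw [this]; ring
        · -- p ≥ 1 : S = Ioc
          have hS : {x : ℝ | ∀ j < K, (u ∈ A (j + 1) ↔ u ∈ A j ∨ (u ∈ I ∧ x ≤ net.WW (A j) u))}
              = Set.Ioc (net.WW C u) (net.WW (A p) u) := by
            ext x
            rw [Set.mem_setOf_eq, hSchar x, Set.mem_Ioc]
            have hCA : C = A (p - 1) := by rw [hCdef, if_neg (by omega)]
            constructor
            · rintro ⟨h1, h2⟩
              exact ⟨by rw [hCA]; exact h2 (p - 1) (by omega), h1⟩
            · rintro ⟨h1, h2⟩
              refine ⟨h2, fun j hj => ?_⟩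
              have : net.WW (A j) u ≤ net.WW (A (p - 1)) u :=
                net.WW_mono (hAmono j (p - 1) (by omega) (by omega)) u
              rw [hCA] at h1
              linarith
          rw [hS, mu01_Ioc hWC hWCp hWp1]
      · -- entry but u ∉ I : both sides zero
        have hfalse : ∀ (P : ℕ → Prop),
            (∀ j, (j < K) → ((u ∈ A (j + 1)) ↔ (u ∈ A j ∨ (u ∈ I ∧ P j)))) → False := by
          intro P h
          have := (h p hpK).mp (hafter (p + 1) (by omega) (by omega))
          rcases this with hc | ⟨hc, -⟩
          · exact hbefore p (by omega) hc
          · exact hI hc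
        have hS : {x : ℝ | ∀ j < K, (u ∈ A (j + 1) ↔ u ∈ A j ∨ (u ∈ I ∧ x ≤ net.WW (A j) u))}
            = ∅ := by
          ext x
          simp only [Set.mem_setOf_eq, Set.mem_empty_iff_false, iff_false]
          intro h
          exact hfalse _ h
        rw [hS]
        simp only [measure_empty, ENNReal.toReal_zero]
        symm
        apply Finset.sum_eq_zero
        intro o _
        rw [if_neg]
        intro h
        exact hfalse _ h
    · -- u never enters
      push_neg at hE
      have hnever : ∀ j, j ≤ K → u ∉ A j := hE
      by_cases hI : u ∈ I
      · -- S = Ioi (WW (A (K-1)) u)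
        have hSchar : ∀ x : ℝ,
            (∀ j < K, (u ∈ A (j + 1) ↔ u ∈ A j ∨ (u ∈ I ∧ x ≤ net.WW (A j) u)))
              ↔ net.WW (A (K - 1)) u < x := by
          intro x
          constructor
          · intro h
            by_contra hcon
            push_neg at hcon
            have := (h (K - 1) (by omega)).mpr (Or.inr ⟨hI, hcon⟩)
            exact hnever (K - 1 + 1) (by omega) this
          · intro h j hj
            apply iff_of_false (hnever (j + 1) (by omega))
            rintro (hm | ⟨-, hx⟩)
            · exact hnever j (by omega) hm
            · have : net.WW (A j) u ≤ net.WW (A (K - 1)) u :=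
                net.WW_mono (hAmono j (K - 1) (by omega) (by omega)) u
              linarith
        have hS : {x : ℝ | ∀ j < K, (u ∈ A (j + 1) ↔ u ∈ A j ∨ (u ∈ I ∧ x ≤ net.WW (A j) u))}
            = Set.Ioi (net.WW (A (K - 1)) u) := by
          ext x
          rw [Set.mem_setOf_eq, hSchar x, Set.mem_Ioi]
        rw [hS, mu01_Ioi (net.WW_nonneg _ u) (net.WW_le_one _ u)]
        have hTchar : ∀ o : Option V,
            (∀ j < K, (u ∈ A (j + 1) ↔ u ∈ A j ∨ (u ∈ I ∧ ∃ v ∈ A j, o = some v)))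
              ↔ (∀ v ∈ A (K - 1), o ≠ some v) := by
          intro o
          constructor
          · intro h v hv he
            have := (h (K - 1) (by omega)).mpr (Or.inr ⟨hI, ⟨v, hv, he⟩⟩)
            exact hnever (K - 1 + 1) (by omega) this
          · intro h j hj
            apply iff_of_false (hnever (j + 1) (by omega))
            rintro (hm | ⟨-, v, hv, he⟩)
            · exact hnever j (by omega) hm
            · exact h v (hAmono j (K - 1) (by omega) (by omega) hv) he
        rw [show ∑ o : Option V,
            (if (∀ j < K, (u ∈ A (j + 1) ↔ u ∈ A j ∨ (u ∈ I ∧ ∃ v ∈ A j, o = some v)))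
              then net.wt u o else 0)
            = ∑ o : Option V, (if (∀ v ∈ A (K - 1), o ≠ some v) then net.wt u o else 0) from
          Finset.sum_congr rfl fun o _ => if_congr (hTchar o) rfl rfl]
        rw [net.sum_wt_not_mem u (A (K - 1))]
      · -- u ∉ I, never enters : both sides 1
        have htriv : ∀ (P : ℕ → Prop) (j : ℕ), j < K →
            ((u ∈ A (j + 1)) ↔ (u ∈ A j ∨ (u ∈ I ∧ P j))) := by
          intro P j hj
          apply iff_of_false (hnever (j + 1) (by omega))
          rintro (hm | ⟨hc, -⟩)
          · exact hnever j (by omega) hm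
          · exact hI hc
        have hS : {x : ℝ | ∀ j < K, (u ∈ A (j + 1) ↔ u ∈ A j ∨ (u ∈ I ∧ x ≤ net.WW (A j) u))}
            = Set.univ := by
          apply Set.eq_univ_of_forall
          intro x j hj
          exact htriv (fun j => x ≤ net.WW (A j) u) j hj
        rw [hS, mu01_univ]
        rw [show ∑ o : Option V,
            (if (∀ j < K, (u ∈ A (j + 1) ↔ u ∈ A j ∨ (u ∈ I ∧ ∃ v ∈ A j, o = some v)))
              then net.wt u o else 0) = ∑ o : Option V, net.wt u o from
          Finset.sum_congr rfl fun o _ =>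
            if_pos fun j hj => htriv (fun j => ∃ v ∈ A j, o = some v) j hj]
        rw [net.sum_wt u]

end FriendNet

namespace FriendNet


lemma mem_Hstep (g : V → Option V) (I H : Finset V) (u : V) :
    u ∈ Hstep g I H ↔ u ∈ H ∨ (u ∈ I ∧ ∃ v ∈ H, g u = some v) := by
  simp only [Hstep, Psi, Finset.mem_union, Finset.mem_inter, Finset.mem_filter,
    Finset.mem_univ, true_and]
  tauto

def ok (g : V → Option V) (Ns I : Finset V) : ℕ → V → Finset (Option V) → Prop
  | 0, _, _ => False
  | f + 1, u, acc =>
    match g u with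
    | none => False
    | some v => some v ∉ acc ∧ (v ∈ Ns ∨ (v ∉ Ns ∧ v ∈ I ∧ ok g Ns I f v (insert (some v) acc)))

lemma none_not_mem_image_some (I : Finset V) : (none : Option V) ∉ I.image some := by
  simp

lemma traceAux_subset_iff (g : V → Option V) (Ns I : Finset V) :
    ∀ (f : ℕ) (u : V) (acc : Finset (Option V)),
      acc ⊆ Finset.univ.image some → Fintype.card V + 2 ≤ f + acc.card →
      (traceAux g Ns f u acc ⊆ I.image some ↔ acc ⊆ I.image some ∧ ok g Ns I f u acc) := by
  intro f
  induction f with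
  | zero =>
    intro u acc hsub hcard
    exfalso
    have h1 : acc.card ≤ (Finset.univ.image (some : V → Option V)).card :=
      Finset.card_le_card hsub
    have h2 : (Finset.univ.image (some : V → Option V)).card ≤ Fintype.card V := by
      simpa using Finset.card_image_le (s := (Finset.univ : Finset V)) (f := some)
    omega
  | succ f ih =>
    intro u acc hsub hcard
    cases hgu : g u with
    | none =>
      simp only [traceAux, hgu, ok]
      constructor
      · intro h
        exact absurd (h (Finset.mem_insert_self _ _)) (none_not_mem_image_some I)
      · rintro ⟨-, h⟩; exact h.elim
    | some v =>
      by_cases hv : some v ∈ acc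
      · simp only [traceAux, hgu, if_pos hv, ok]
        constructor
        · intro h
          exact absurd (h (Finset.mem_insert_self _ _)) (none_not_mem_image_some I)
        · rintro ⟨-, h, -⟩; exact (h hv).elim
      · by_cases hNs : v ∈ Ns
        · simp only [traceAux, hgu, if_neg hv, if_pos hNs, ok]
          tauto
        · simp only [traceAux, hgu, if_neg hv, if_neg hNs, ok]
          rw [ih v (insert (some v) acc)
            (Finset.insert_subset (by simp) hsub)
            (by rw [Finset.card_insert_of_notMem hv]; omega)]
          rw [Finset.insert_subset_iff]
          simp only [Finset.mem_image]
          constructor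
          · rintro ⟨⟨⟨x, hxI, hx⟩, hacc⟩, hok⟩
            cases hx
            exact ⟨hacc, hv, Or.inr ⟨hNs, hxI, hok⟩⟩
          · rintro ⟨hacc, -, h | ⟨-, hI, hok⟩⟩
            · exact absurd h hNs
            · exact ⟨⟨⟨v, hI, rfl⟩, hacc⟩, hok⟩

lemma ok_chain (g : V → Option V) (Ns I : Finset V) :
    ∀ (f : ℕ) (u : V) (acc : Finset (Option V)), ok g Ns I f u acc →
      ∃ m, ∃ c : ℕ → V, 0 < m ∧ c 0 = u ∧ (∀ i < m, g (c i) = some (c (i + 1))) ∧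
        c m ∈ Ns ∧ (∀ i, 0 < i → i < m → c i ∈ I) ∧
        (∀ i, 0 < i → i ≤ m → some (c i) ∉ acc) ∧
        (∀ i j, 0 < i → i < j → j ≤ m → c i ≠ c j) := by
  intro f
  induction f with
  | zero => intro u acc h; exact h.elim
  | succ f ih =>
    intro u acc h
    rw [ok] at h
    cases hgu : g u with
    | none => rw [hgu] at h; exact h.elim
    | some v =>
      rw [hgu] at h
      obtain ⟨hvacc, h⟩ := h
      rcases h with hNs | ⟨hNs, hvI, hok⟩
      · exact ⟨1, fun i => if i = 0 then u else v, one_pos, by simp, by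
          intro i hi
          interval_cases i
          simpa using hgu, by simp [hNs], by omega, by
          intro i h1 h2
          interval_cases i
          simpa using hvacc, by omega⟩
      · obtain ⟨m, c, hm, hc0, hstep, hcNs, hcI, hcacc, hcinj⟩ := ih v _ hok
        refine ⟨m + 1, fun i => if i = 0 then u else c (i - 1), by omega, by simp, ?_, ?_, ?_, ?_, ?_⟩
        · intro i hi
          rcases Nat.eq_zero_or_pos i with rfl | hi0
          · simpa [hc0] using hgu
          · have : i - 1 < m := by omega
            simpa [Nat.pos_iff_ne_zero.mp hi0, show i + 1 ≠ 0 by omega,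
              show i + 1 - 1 = i - 1 + 1 by omega] using hstep _ this
        · simpa [show m + 1 ≠ 0 by omega, show m + 1 - 1 = m from rfl] using hcNs
        · intro i h1 h2
          rcases Nat.eq_or_lt_of_le h1 with rfl | h1'
          · simpa [hc0]
          · have h3 : 0 < i - 1 := by omega
            have h4 : i - 1 < m := by omega
            simpa [show i ≠ 0 by omega] using hcI _ h3 h4
        · intro i h1 h2
          rcases Nat.eq_or_lt_of_le h1 with rfl | h1'
          · simpa [hc0]
          · have := hcacc (i - 1) (by omega) (by omega)
            simp only [show i ≠ 0 by omega, if_neg] at *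
            intro hmem
            exact this (Finset.mem_insert_of_mem hmem)
        · intro i j h1 h2 h3
          simp only [if_neg (show ¬ i = 0 by omega), if_neg (show ¬ j = 0 by omega)]
          rcases Nat.eq_or_lt_of_le h1 with h1e | h1'
          · have hmem : some (c (j - 1)) ∉ insert (some v) acc := hcacc (j - 1) (by omega) (by omega)
            have hne : c (j - 1) ≠ v := by
              intro he
              exact hmem (by rw [he]; exact Finset.mem_insert_self _ _)
            have hi1 : i = 1 := by omega
            subst hi1
            show c 0 ≠ c (j - 1)
            rw [hc0]
            exact fun he => hne he.symm
          · exact hcinj (i - 1) (j - 1) (by omega) (by omega) (by omega)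



lemma chain_ok (g : V → Option V) (Ns I : Finset V) (m : ℕ) (c : ℕ → V)
    (hstep : ∀ i < m, g (c i) = some (c (i + 1)))
    (hNs : c m ∈ Ns) (hNs' : ∀ i < m, c i ∉ Ns)
    (hI : ∀ i, 0 < i → i < m → c i ∈ I)
    (hinj : ∀ i j, i ≤ m → j ≤ m → c i = c j → i = j) :
    ∀ (f : ℕ) (k : ℕ) (acc : Finset (Option V)), k < m → m ≤ k + f →
      (∀ i, k < i → i ≤ m → some (c i) ∉ acc) → ok g Ns I f (c k) acc := by
  intro f
  induction f with
  | zero => intro k acc h1 h2 _; omega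
  | succ f ih =>
    intro k acc h1 h2 hacc
    rw [ok, hstep k h1]
    refine ⟨hacc (k + 1) (by omega) (by omega), ?_⟩
    rcases Nat.eq_or_lt_of_le (show k + 1 ≤ m by omega) with he | hlt
    · left; rw [he]; exact hNs
    · right
      refine ⟨hNs' _ hlt, hI _ (by omega) hlt, ?_⟩
      refine ih (k + 1) _ hlt (by omega) ?_
      intro i hi1 hi2
      rw [Finset.mem_insert]
      push_neg
      refine ⟨?_, hacc i (by omega) hi2⟩
      intro he
      have := hinj i (k + 1) (by omega) (by omega) (by injection he)
      omega

lemma iterate_Hstep_subset (g : V → Option V) (I H : Finset V) :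
    ∀ k k', k ≤ k' → (Hstep g I)^[k] H ⊆ (Hstep g I)^[k'] H := by
  have hmono : ∀ k, (Hstep g I)^[k] H ⊆ (Hstep g I)^[k + 1] H := by
    intro k
    rw [Function.iterate_succ_apply']
    exact Finset.subset_union_left
  intro k k' hk
  induction k' with
  | zero => simpa [Nat.le_zero.mp hk] using Finset.Subset.refl _
  | succ k' ih =>
    rcases Nat.eq_or_lt_of_le hk with rfl | hlt
    · exact Finset.Subset.refl _
    · exact (ih (by omega)).trans (hmono k')

lemma chain_mem_iterate (g : V → Option V) (I : Finset V) (Ns : Finset V) :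
    ∀ (m : ℕ) (c : ℕ → V), (∀ i < m, g (c i) = some (c (i + 1))) → c m ∈ Ns →
      (∀ i < m, c i ∈ I) → c 0 ∈ (Hstep g I)^[m] Ns := by
  intro m
  induction m with
  | zero => intro c _ h _; simpa using h
  | succ m ih =>
    intro c hstep hNs hI
    rw [Function.iterate_succ_apply']
    rw [mem_Hstep]
    right
    refine ⟨hI 0 (by omega), c 1, ?_, hstep 0 (by omega)⟩
    exact ih (fun i => c (i + 1)) (fun i hi => hstep (i + 1) (by omega))
      hNs (fun i hi => hI (i + 1) (by omega))

lemma iterate_chain (g : V → Option V) (I : Finset V) (Ns : Finset V) :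
    ∀ (k : ℕ) (u : V), u ∈ (Hstep g I)^[k] Ns →
      ∃ m ≤ k, ∃ c : ℕ → V, c 0 = u ∧ (∀ i < m, g (c i) = some (c (i + 1))) ∧
        c m ∈ Ns ∧ (∀ i < m, c i ∈ I) := by
  intro k
  induction k with
  | zero =>
    intro u hu
    exact ⟨0, le_refl _, fun _ => u, rfl, by omega, by simpa using hu, by omega⟩
  | succ k ih =>
    intro u hu
    rw [Function.iterate_succ_apply', mem_Hstep] at hu
    rcases hu with hu | ⟨huI, v, hv, hguv⟩
    · obtain ⟨m, hm, c, h⟩ := ih u hu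
      exact ⟨m, by omega, c, h⟩
    · obtain ⟨m, hm, c, hc0, hstep, hNs, hI⟩ := ih v hv
      refine ⟨m + 1, by omega, fun i => if i = 0 then u else c (i - 1), by simp, ?_, ?_, ?_⟩
      · intro i hi
        rcases Nat.eq_zero_or_pos i with rfl | hi0
        · simpa [hc0] using hguv
        · simpa [show i ≠ 0 by omega, show i + 1 ≠ 0 by omega,
            show i + 1 - 1 = i - 1 + 1 by omega] using hstep (i - 1) (by omega)
      · simpa [show m + 1 ≠ 0 by omega] using hNs
      · intro i hi
        rcases Nat.eq_zero_or_pos i with rfl | hi0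
        · simpa using huI
        · simpa [show i ≠ 0 by omega] using hI (i - 1) (by omega)

lemma chain_first_hit (Ns : Finset V) (m : ℕ) (c : ℕ → V) (hNs : c m ∈ Ns) :
    ∃ m' ≤ m, c m' ∈ Ns ∧ ∀ i < m', c i ∉ Ns := by
  classical
  have hex : ∃ i, c i ∈ Ns := ⟨m, hNs⟩
  refine ⟨Nat.find hex, ?_, Nat.find_spec hex, fun i hi => Nat.find_min hex hi⟩
  exact Nat.find_min' hex hNs

lemma chain_inj_of_first_hit (g : V → Option V) (Ns : Finset V) (m : ℕ) (c : ℕ → V)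
    (hstep : ∀ i < m, g (c i) = some (c (i + 1)))
    (hNs : c m ∈ Ns) (hNs' : ∀ i < m, c i ∉ Ns) :
    ∀ i j, i ≤ m → j ≤ m → c i = c j → i = j := by
  have key : ∀ i j, i < j → j ≤ m → c i ≠ c j := by
    intro i j hij hjm he
    have hshift : ∀ l, j + l ≤ m → c (i + l) = c (j + l) := by
      intro l
      induction l with
      | zero => intro _; simpa using he
      | succ l ih =>
        intro hl
        have h1 := hstep (i + l) (by omega)
        have h2 := hstep (j + l) (by omega)
        rw [ih (by omega)] at h1
        rw [h1] at h2
        injection h2 with h2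
    have := hshift (m - j) (by omega)
    rw [show j + (m - j) = m by omega] at this
    exact hNs' (i + (m - j)) (by omega) (this ▸ hNs)
  intro i j hi hj he
  rcases lt_trichotomy i j with h | h | h
  · exact absurd he (key i j h hj)
  · exact h
  · exact absurd he.symm (key j i h hi)

lemma inj_chain_card (m : ℕ) (c : ℕ → V)
    (hinj : ∀ i j, i ≤ m → j ≤ m → c i = c j → i = j) : m < Fintype.card V := by
  have : Function.Injective (fun i : Fin (m + 1) => c i) := by
    intro i j he
    exact Fin.ext (hinj i j (by omega) (by omega) he)
  have := Fintype.card_le_of_injective _ this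
  simpa using this



lemma t_not_mem_Nbr (net : FriendNet V) : net.t ∉ net.Nbr net.s := by
  intro h
  have : net.G.Adj net.t net.s := by
    classical
    simpa [Nbr] using h
  exact net.t_not_friend this.symm

lemma trace_subset_iff_mem_Hinf (net : FriendNet V) (g : V → Option V) (I : Finset V) :
    net.trace g ⊆ I.image some ↔ net.t ∈ net.Hinf g I := by
  have hNbr : net.t ∉ net.Nbr net.s := t_not_mem_Nbr net
  rw [trace, traceAux_subset_iff g _ I (Fintype.card V + 1) net.t {some net.t}
      (by simp) (by simp)]
  constructor
  · rintro ⟨hts, hok⟩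
    have htI : net.t ∈ I := by
      have := hts (Finset.mem_singleton_self (some net.t))
      simpa using this
    obtain ⟨m, c, hm, hc0, hstep, hcNs, hcI, hcacc, hcinj⟩ := ok_chain g _ I _ _ _ hok
    have hinj : ∀ i j, i ≤ m → j ≤ m → c i = c j → i = j := by
      intro i j hi hj he
      rcases Nat.eq_zero_or_pos i with rfl | hi0
      · rcases Nat.eq_zero_or_pos j with rfl | hj0
        · rfl
        · exact absurd (by rw [← he, hc0]; exact Finset.mem_singleton_self _) (hcacc j hj0 hj)
      · rcases Nat.eq_zero_or_pos j with rfl | hj0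
        · exact absurd (by rw [he, hc0]; exact Finset.mem_singleton_self _) (hcacc i hi0 hi)
        · rcases lt_trichotomy i j with h | h | h
          · exact absurd he (hcinj i j hi0 h hj)
          · exact h
          · exact absurd he.symm (hcinj j i hj0 h hi)
    have hmcard : m < Fintype.card V := inj_chain_card m c hinj
    have hall : c 0 ∈ (Hstep g I)^[m] (net.Nbr net.s) :=
      chain_mem_iterate g I _ m c hstep hcNs (by
        intro i hi
        rcases Nat.eq_zero_or_pos i with rfl | hi0
        · rw [hc0]; exact htI
        · exact hcI i hi0 hi)
    rw [hc0] at hall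
    exact iterate_Hstep_subset g I _ m (Fintype.card V) (by omega) hall
  · intro ht
    obtain ⟨m, hmK, c, hc0, hstep, hNsm, hI⟩ :=
      iterate_chain g I _ (Fintype.card V) net.t ht
    obtain ⟨m', hm'm, hNs'', hfirst⟩ := chain_first_hit _ m c hNsm
    have hstep' : ∀ i < m', g (c i) = some (c (i + 1)) :=
      fun i hi => hstep i (lt_of_lt_of_le hi hm'm)
    have hinj := chain_inj_of_first_hit g _ m' c hstep' hNs'' hfirst
    have hm'0 : 0 < m' := by
      rcases Nat.eq_zero_or_pos m' with rfl | h
      · exact absurd (hc0 ▸ hNs'') hNbr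
      · exact h
    have htI : net.t ∈ I := by rw [← hc0]; exact hI 0 (by omega)
    have hok : ok g (net.Nbr net.s) I (Fintype.card V + 1) (c 0) {some net.t} := by
      refine chain_ok g _ I m' c hstep' hNs'' hfirst
        (fun i h1 h2 => hI i (lt_of_lt_of_le h2 hm'm)) hinj
        (Fintype.card V + 1) 0 {some net.t} hm'0 (by omega) ?_
      intro i hi1 hi2 hmem
      rw [Finset.mem_singleton] at hmem
      injection hmem with hmem
      rw [← hc0] at hmem
      have := hinj i 0 (by omega) (by omega) hmem
      omega
    rw [hc0] at hok
    exact ⟨by simpa using htI, hok⟩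

end FriendNet

-- ===== glue: trajectory decomposition =====

lemma meas_iff_helper (P Q R : Prop) [Decidable P] [Decidable Q] [Decidable R] (c : ℝ) :
    MeasurableSet {x : ℝ | P ↔ Q ∨ (R ∧ x ≤ c)} := by
  have hle : MeasurableSet {x : ℝ | x ≤ c} := measurableSet_Iic
  have hnle : MeasurableSet {x : ℝ | ¬ x ≤ c} := hle.compl
  by_cases hP : P <;> by_cases hQ : Q <;> by_cases hR : R <;>
    simp only [hP, hQ, hR, true_iff, iff_true, false_iff, iff_false, true_and, false_and,
      and_true, and_false, or_false, false_or, true_or, or_true, not_or, not_and, not_false_iff,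
      not_true] <;>
    first
      | exact MeasurableSet.univ
      | exact MeasurableSet.empty
      | exact hle
      | exact hnle
      | simp only [Set.setOf_true]; exact MeasurableSet.univ
      | simp only [Set.setOf_false]; exact MeasurableSet.empty

def AA {K : ℕ} (A : Fin (K + 1) → Finset V) (n : ℕ) : Finset V := A ⟨min n K, by omega⟩

lemma AA_eq {K : ℕ} (A : Fin (K + 1) → Finset V) {n : ℕ} (h : n ≤ K) :
    AA A n = A ⟨n, by omega⟩ := by
  simp only [AA, Nat.min_eq_left h]

lemma AA_last {K : ℕ} (A : Fin (K + 1) → Finset V) : AA A K = A (Fin.last K) := by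
  rw [AA_eq A (le_refl K)]; rfl

namespace FriendNet
variable (net : FriendNet V)

instance : IsProbabilityMeasure ((volume : Measure ℝ).restrict (Set.Icc (0:ℝ) 1)) := by
  constructor; simp [Real.volume_Icc]

instance : IsProbabilityMeasure (thetaMeasure V) :=
  inferInstanceAs (IsProbabilityMeasure
    (Measure.pi fun _ : V => (volume : Measure ℝ).restrict (Set.Icc (0:ℝ) 1)))

lemma mem_Cstep (I : Finset V) (θ : V → ℝ) (C : Finset V) (u : V) :
    u ∈ net.Cstep θ I C ↔ u ∈ C ∨ (u ∈ I ∧ θ u ≤ net.WW C u) := by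
  simp only [Cstep, Phi, WW, Finset.mem_union, Finset.mem_inter, Finset.mem_filter,
    Finset.mem_univ, true_and]
  tauto

noncomputable def traj (I : Finset V) (θ : V → ℝ) : Fin (Fintype.card V + 1) → Finset V :=
  fun j => (net.Cstep θ I)^[(j : ℕ)] (net.Nbr net.s)

def trajH (net : FriendNet V) (I : Finset V) (g : V → Option V) :
    Fin (Fintype.card V + 1) → Finset V :=
  fun j => (Hstep g I)^[(j : ℕ)] (net.Nbr net.s)

noncomputable def Sset (I : Finset V) (A : Fin (Fintype.card V + 1) → Finset V) (u : V) :
    Set ℝ :=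
  {x : ℝ | ∀ j < Fintype.card V,
    (u ∈ AA A (j + 1) ↔ u ∈ AA A j ∨ (u ∈ I ∧ x ≤ net.WW (AA A j) u))}

open Classical in
noncomputable def Tfin (I : Finset V) (A : Fin (Fintype.card V + 1) → Finset V) (u : V) :
    Finset (Option V) :=
  Finset.univ.filter fun o : Option V => ∀ j < Fintype.card V,
    (u ∈ AA A (j + 1) ↔ u ∈ AA A j ∨ (u ∈ I ∧ ∃ v ∈ AA A j, o = some v))

lemma mem_Tfin (I : Finset V) (A : Fin (Fintype.card V + 1) → Finset V) (u : V)
    (o : Option V) :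
    o ∈ Tfin I A u ↔ ∀ j < Fintype.card V,
      (u ∈ AA A (j + 1) ↔ u ∈ AA A j ∨ (u ∈ I ∧ ∃ v ∈ AA A j, o = some v)) := by
  rw [Tfin, Finset.mem_filter]
  simp

lemma measurable_Sset (I : Finset V) (A : Fin (Fintype.card V + 1) → Finset V) (u : V) :
    MeasurableSet (net.Sset I A u) := by
  classical
  have : net.Sset I A u = ⋂ (j : ℕ), ⋂ (_ : j < Fintype.card V),
      {x : ℝ | (u ∈ AA A (j + 1) ↔ u ∈ AA A j ∨ (u ∈ I ∧ x ≤ net.WW (AA A j) u))} := by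
    ext x; simp [Sset]
  rw [this]
  exact MeasurableSet.iInter fun j => MeasurableSet.iInter fun _ =>
    meas_iff_helper _ _ _ _

lemma traj_eq_iff (I : Finset V) (θ : V → ℝ) (A : Fin (Fintype.card V + 1) → Finset V) :
    net.traj I θ = A ↔ (A 0 = net.Nbr net.s ∧ ∀ u, θ u ∈ net.Sset I A u) := by
  constructor
  · rintro rfl
    refine ⟨rfl, fun u => ?_⟩
    intro j hj
    have h1 : AA (net.traj I θ) j = (net.Cstep θ I)^[j] (net.Nbr net.s) := by
      rw [AA_eq _ (le_of_lt hj)]; rfl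
    have h2 : AA (net.traj I θ) (j + 1) = (net.Cstep θ I)^[j + 1] (net.Nbr net.s) := by
      rw [AA_eq _ (by omega)]; rfl
    rw [h1, h2, Function.iterate_succ_apply', net.mem_Cstep I θ, ← h1]
  · rintro ⟨h0, hS⟩
    have key : ∀ n (hn : n ≤ Fintype.card V),
        (net.Cstep θ I)^[n] (net.Nbr net.s) = A ⟨n, by omega⟩ := by
      intro n
      induction n with
      | zero => intro _; simpa using h0.symm
      | succ n ih =>
        intro hn
        rw [Function.iterate_succ_apply', ih (by omega)]
        ext u
        rw [net.mem_Cstep I θ]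
        have := hS u n (by omega)
        rw [AA_eq _ (by omega : n + 1 ≤ Fintype.card V), AA_eq _ (by omega : n ≤ Fintype.card V)] at this
        exact (this.symm).trans (by rfl)
    funext j
    have := key (j : ℕ) (Nat.lt_succ_iff.mp j.isLt)
    simpa [traj] using this

lemma trajH_eq_iff (I : Finset V) (g : V → Option V)
    (A : Fin (Fintype.card V + 1) → Finset V) :
    trajH net I g = A ↔ (A 0 = net.Nbr net.s ∧ ∀ u, g u ∈ Tfin I A u) := by
  constructor
  · rintro rfl
    refine ⟨rfl, fun u => ?_⟩
    rw [mem_Tfin]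
    intro j hj
    have h1 : AA (trajH net I g) j = (Hstep g I)^[j] (net.Nbr net.s) := by
      rw [AA_eq _ (le_of_lt hj)]; rfl
    have h2 : AA (trajH net I g) (j + 1) = (Hstep g I)^[j + 1] (net.Nbr net.s) := by
      rw [AA_eq _ (by omega)]; rfl
    rw [h1, h2, Function.iterate_succ_apply', mem_Hstep, ← h1]
  · rintro ⟨h0, hS⟩
    have key : ∀ n (hn : n ≤ Fintype.card V),
        (Hstep g I)^[n] (net.Nbr net.s) = A ⟨n, by omega⟩ := by
      intro n
      induction n with
      | zero => intro _; simpa using h0.symm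
      | succ n ih =>
        intro hn
        rw [Function.iterate_succ_apply', ih (by omega)]
        ext u
        rw [mem_Hstep]
        have := (mem_Tfin I A u (g u)).mp (hS u) n (by omega)
        rw [AA_eq _ (by omega : n + 1 ≤ Fintype.card V), AA_eq _ (by omega : n ≤ Fintype.card V)] at this
        rw [← this]
    funext j
    have := key (j : ℕ) (Nat.lt_succ_iff.mp j.isLt)
    simpa [trajH] using this

lemma measurable_traj_fiber (I : Finset V) (A : Fin (Fintype.card V + 1) → Finset V) :
    MeasurableSet {θ : V → ℝ | net.traj I θ = A} := by
  by_cases h0 : A 0 = net.Nbr net.s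
  · have : {θ : V → ℝ | net.traj I θ = A} = Set.univ.pi (fun u => net.Sset I A u) := by
      ext θ
      rw [Set.mem_setOf_eq, net.traj_eq_iff]
      simp [h0, Set.mem_univ_pi]
    rw [this]
    exact MeasurableSet.univ_pi fun u => net.measurable_Sset I A u
  · have : {θ : V → ℝ | net.traj I θ = A} = ∅ := by
      ext θ
      rw [Set.mem_setOf_eq, net.traj_eq_iff]
      simp [h0]
    rw [this]
    exact MeasurableSet.empty

lemma theta_fiber_measure (I : Finset V) (A : Fin (Fintype.card V + 1) → Finset V) :
    (thetaMeasure V {θ : V → ℝ | net.traj I θ = A}).toReal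
      = if A 0 = net.Nbr net.s then ∏ u : V, (mu01 (net.Sset I A u)).toReal else 0 := by
  by_cases h0 : A 0 = net.Nbr net.s
  · rw [if_pos h0]
    have hset : {θ : V → ℝ | net.traj I θ = A} = Set.univ.pi (fun u => net.Sset I A u) := by
      ext θ
      rw [Set.mem_setOf_eq, net.traj_eq_iff]
      simp [h0, Set.mem_univ_pi]
    rw [hset]
    rw [show thetaMeasure V = Measure.pi (fun _ : V => mu01) from rfl]
    rw [Measure.pi_pi]
    exact ENNReal.toReal_prod _ _
  · rw [if_neg h0]
    have hset : {θ : V → ℝ | net.traj I θ = A} = ∅ := by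
      ext θ
      rw [Set.mem_setOf_eq, net.traj_eq_iff]
      simp [h0]
    rw [hset]
    simp

lemma realWeight_eq_prod (g : V → Option V) :
    net.realWeight g = ∏ u : V, net.wt u (g u) := rfl

lemma g_fiber_sum (I : Finset V) (A : Fin (Fintype.card V + 1) → Finset V) :
    ∑ g ∈ Finset.univ.filter (fun g : V → Option V => trajH net I g = A), net.realWeight g
      = if A 0 = net.Nbr net.s then ∏ u : V, ∑ o ∈ Tfin I A u, net.wt u o else 0 := by
  classical
  by_cases h0 : A 0 = net.Nbr net.s
  · rw [if_pos h0]
    have hset : Finset.univ.filter (fun g : V → Option V => trajH net I g = A)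
        = Fintype.piFinset (fun u => Tfin I A u) := by
      ext g
      rw [Finset.mem_filter, Fintype.mem_piFinset, trajH_eq_iff net]
      simp [h0]
    rw [hset, Finset.prod_univ_sum]
    apply Finset.sum_congr rfl
    intro g _
    exact (net.realWeight_eq_prod g).symm
  · rw [if_neg h0]
    apply Finset.sum_eq_zero
    intro g hg
    rw [Finset.mem_filter] at hg
    exact absurd (((trajH_eq_iff net I g A).mp hg.2).1) h0

lemma per_traj (I : Finset V) (A : Fin (Fintype.card V + 1) → Finset V) :
    (thetaMeasure V {θ : V → ℝ | net.traj I θ = A}).toReal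
      = ∑ g ∈ Finset.univ.filter (fun g : V → Option V => trajH net I g = A),
          net.realWeight g := by
  classical
  rw [net.theta_fiber_measure, net.g_fiber_sum]
  by_cases h0 : A 0 = net.Nbr net.s
  · rw [if_pos h0, if_pos h0]
    by_cases hmono : ∀ j, j + 1 ≤ Fintype.card V → AA A j ⊆ AA A (j + 1)
    · apply Finset.prod_congr rfl
      intro u _
      have hK : 0 < Fintype.card V := Fintype.card_pos_iff.mpr ⟨net.t⟩
      have hsum : ∑ o ∈ Tfin I A u, net.wt u o
          = ∑ o : Option V, (if (∀ j < Fintype.card V,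
              (u ∈ AA A (j + 1) ↔ u ∈ AA A j ∨ (u ∈ I ∧ ∃ v ∈ AA A j, o = some v)))
            then net.wt u o else 0) := by
        rw [Tfin, Finset.sum_filter]
      rw [hsum]
      exact net.core_lemma I u (Fintype.card V) hK (AA A) hmono
    · push_neg at hmono
      obtain ⟨j, hjK, hsub⟩ := hmono
      obtain ⟨u', hu'1, hu'2⟩ := Finset.not_subset.mp hsub
      have hL : (mu01 (net.Sset I A u')).toReal = 0 := by
        have : net.Sset I A u' = ∅ := by
          ext x
          simp only [Sset, Set.mem_setOf_eq, Set.mem_empty_iff_false, iff_false, not_forall]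
          exact ⟨j, by omega, fun h => hu'2 (h.mpr (Or.inl hu'1))⟩
        rw [this]
        simp
      have hR : ∑ o ∈ Tfin I A u', net.wt u' o = 0 := by
        have : Tfin I A u' = ∅ := by
          ext o
          rw [mem_Tfin]
          simp only [Finset.notMem_empty, iff_false, not_forall]
          exact ⟨j, by omega, fun h => hu'2 (h.mpr (Or.inl hu'1))⟩
        rw [this, Finset.sum_empty]
      rw [Finset.prod_eq_zero (Finset.mem_univ u') hL,
        Finset.prod_eq_zero (Finset.mem_univ u') hR]
  · rw [if_neg h0, if_neg h0]

lemma f_eq_sum_traj (I : Finset V) :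
    net.f I = ∑ A : Fin (Fintype.card V + 1) → Finset V,
      (if net.t ∈ A (Fin.last (Fintype.card V)) then
        (thetaMeasure V {θ : V → ℝ | net.traj I θ = A}).toReal else 0) := by
  classical
  rw [f]
  have hset : {θ : V → ℝ | net.t ∈ net.Cinf θ I}
      = ⋃ A ∈ Finset.univ.filter (fun A : Fin (Fintype.card V + 1) → Finset V =>
          net.t ∈ A (Fin.last (Fintype.card V))), {θ : V → ℝ | net.traj I θ = A} := by
    ext θ
    simp only [Set.mem_setOf_eq, Set.mem_iUnion, Finset.mem_filter, Finset.mem_univ, true_and,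
      exists_prop]
    constructor
    · intro h
      refine ⟨net.traj I θ, ?_, rfl⟩
      simpa [traj, Cinf, Fin.val_last] using h
    · rintro ⟨A, hA, rfl⟩
      simpa [traj, Cinf, Fin.val_last] using hA
  rw [hset, measure_biUnion_finset ?disj ?meas]
  · rw [ENNReal.toReal_sum (fun A _ => measure_ne_top _ _), Finset.sum_filter]
  case disj =>
    intro A hA A' hA' hne
    apply Set.disjoint_left.mpr
    intro θ h1 h2
    rw [Set.mem_setOf_eq] at h1 h2
    exact hne (h1 ▸ h2 ▸ rfl)
  case meas =>
    intro A _
    exact net.measurable_traj_fiber I A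

lemma g_sum_fiberwise (I : Finset V) :
    ∑ g : V → Option V, net.realWeight g * net.fg g I
      = ∑ A : Fin (Fintype.card V + 1) → Finset V,
          (if net.t ∈ A (Fin.last (Fintype.card V)) then
            ∑ g ∈ Finset.univ.filter (fun g : V → Option V => trajH net I g = A),
              net.realWeight g else 0) := by
  classical
  rw [← Finset.sum_fiberwise Finset.univ (fun g => trajH net I g)
    (fun g => net.realWeight g * net.fg g I)]
  apply Finset.sum_congr rfl
  intro A _
  have hHinf : ∀ g : V → Option V, trajH net I g = A →
      (net.t ∈ net.Hinf g I ↔ net.t ∈ A (Fin.last (Fintype.card V))) := by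
    intro g hg
    have : net.Hinf g I = A (Fin.last (Fintype.card V)) := by
      rw [← hg]
      simp [trajH, Hinf, Fin.val_last]
    rw [this]
  by_cases ht : net.t ∈ A (Fin.last (Fintype.card V))
  · rw [if_pos ht]
    apply Finset.sum_congr rfl
    intro g hg
    rw [Finset.mem_filter] at hg
    have hfg : net.fg g I = 1 := by
      rw [fg, if_pos]
      rw [net.trace_subset_iff_mem_Hinf, hHinf g hg.2]
      exact ht
    rw [hfg, mul_one]
  · rw [if_neg ht]
    apply Finset.sum_eq_zero
    intro g hg
    rw [Finset.mem_filter] at hg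
    have hfg : net.fg g I = 0 := by
      rw [fg, if_neg]
      rw [net.trace_subset_iff_mem_Hinf, hHinf g hg.2]
      exact ht
    rw [hfg, mul_zero]

end FriendNet

/-- Corollary 1: the acceptance probability admits the explicit formula
`f(I) = Σ_{g ∈ 𝒢} Pr[g] · f(g, I)` where `f(g, I) = 1` if `t(g) ⊆ I` and `0` otherwise. -/
theorem acceptance_prob_explicit_formula (net : FriendNet V) (I : Finset V) :
    net.f I = ∑ g : V → Option V, net.realWeight g * net.fg g I := by
  classical
  rw [net.f_eq_sum_traj I, net.g_sum_fiberwise I]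
  apply Finset.sum_congr rfl
  intro A _
  by_cases ht : net.t ∈ A (Fin.last (Fintype.card V))
  · rw [if_pos ht, if_pos ht, net.per_traj I A]
  · rw [if_neg ht, if_neg ht]
end

section
/- For every realization g, t ∈ H_∞(g,V) (i.e., t can become a friend of s in g even when all users are invited) if and only if g is a type-1 realization, that is, ℵ0 ∉ t(g). -/
open Finset MeasureTheory

variable {V : Type} [Fintype V] [DecidableEq V]

section Aux

variable {V : Type} [Fintype V] [DecidableEq V]

/-- Forward step on `Option V`: `none` is absorbing. -/
def Fb (g : V → Option V) : Option V → Option V := fun o => o.bind g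

lemma Fb_some (g : V → Option V) (u : V) : Fb g (some u) = g u := rfl

lemma Fb_iterate_none (g : V → Option V) (k : ℕ) : (Fb g)^[k] none = none :=
  Function.iterate_fixed rfl k

lemma Fb_some_of_le (g : V → Option V) {x : Option V} {n : ℕ} {u : V}
    (h : (Fb g)^[n] x = some u) {i : ℕ} (hi : i ≤ n) :
    ∃ w, (Fb g)^[i] x = some w := by
  cases hx : (Fb g)^[i] x with
  | some w => exact ⟨w, rfl⟩
  | none =>
    exfalso
    have e : (Fb g)^[n - i + i] x = (Fb g)^[n - i] ((Fb g)^[i] x) :=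
      Function.iterate_add_apply _ _ _ _
    rw [Nat.sub_add_cancel hi] at e
    rw [e, hx, Fb_iterate_none] at h
    exact nomatch h

lemma orbit_cycle (g : V → Option V) (x : Option V) {i n : ℕ} (hi : i ≤ n)
    (hcyc : (Fb g)^[n + 1] x = (Fb g)^[i] x) :
    ∀ k, ∃ j ≤ n, (Fb g)^[k] x = (Fb g)^[j] x := by
  intro k
  induction k using Nat.strong_induction_on with
  | _ k ih =>
    by_cases hk : k ≤ n
    · exact ⟨k, hk, rfl⟩
    · push_neg at hk
      have hk' : n + 1 ≤ k := hk
      have e1 : (Fb g)^[k] x = (Fb g)^[k - (n + 1) + i] x := by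
        calc (Fb g)^[k] x = (Fb g)^[k - (n + 1) + (n + 1)] x := by
              rw [Nat.sub_add_cancel hk']
          _ = (Fb g)^[k - (n + 1)] ((Fb g)^[n + 1] x) :=
              Function.iterate_add_apply _ _ _ _
          _ = (Fb g)^[k - (n + 1)] ((Fb g)^[i] x) := by rw [hcyc]
          _ = (Fb g)^[k - (n + 1) + i] x := (Function.iterate_add_apply _ _ _ _).symm
      obtain ⟨j, hj, hje⟩ := ih (k - (n + 1) + i) (by omega)
      exact ⟨j, hj, e1.trans hje⟩

lemma orbit_inj_card (g : V → Option V) (x : Option V) {n : ℕ} {u : V}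
    (hinj : ∀ i j, i ≤ n → j ≤ n → (Fb g)^[i] x = (Fb g)^[j] x → i = j)
    (hn : (Fb g)^[n] x = some u) :
    n + 1 ≤ Fintype.card V := by
  classical
  have hcard : ((Finset.range (n + 1)).image (fun i => (Fb g)^[i] x)).card = n + 1 := by
    rw [Finset.card_image_of_injOn, Finset.card_range]
    intro i hi j hj hij
    exact hinj i j (by simpa using Nat.lt_succ_iff.mp (Finset.mem_range.mp hi))
      (by simpa using Nat.lt_succ_iff.mp (Finset.mem_range.mp hj)) hij
  have hsub : (Finset.range (n + 1)).image (fun i => (Fb g)^[i] x) ⊆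
      Finset.univ.image some := by
    intro o ho
    obtain ⟨i, hi, rfl⟩ := Finset.mem_image.mp ho
    obtain ⟨w, hw⟩ := Fb_some_of_le g hn (Nat.lt_succ_iff.mp (Finset.mem_range.mp hi))
    exact Finset.mem_image.mpr ⟨w, Finset.mem_univ w, hw.symm⟩
  have := Finset.card_le_card hsub
  rw [hcard, Finset.card_image_of_injective _ (Option.some_injective V)] at this
  simpa using this

lemma orbit_bounded (g : V → Option V) (x : Option V) (S : Finset V)
    (h : ∃ k, (Fb g)^[k] x ∈ S.image some) :
    ∃ k ≤ Fintype.card V, (Fb g)^[k] x ∈ S.image some := by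
  classical
  set k := Nat.find h with hkdef
  have hk : (Fb g)^[k] x ∈ S.image some := Nat.find_spec h
  have hmin : ∀ j < k, (Fb g)^[j] x ∉ S.image some := fun j hj => Nat.find_min h hj
  obtain ⟨u, _, hu⟩ := Finset.mem_image.mp hk
  have hinj : ∀ i j, i ≤ k → j ≤ k → (Fb g)^[i] x = (Fb g)^[j] x → i = j := by
    have key : ∀ i j, i < j → j ≤ k → (Fb g)^[i] x ≠ (Fb g)^[j] x := by
      intro i j hij hjk heq
      have e : (Fb g)^[k] x = (Fb g)^[k - j + i] x := by
        calc (Fb g)^[k] x = (Fb g)^[k - j + j] x := by rw [Nat.sub_add_cancel hjk]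
          _ = (Fb g)^[k - j] ((Fb g)^[j] x) := Function.iterate_add_apply _ _ _ _
          _ = (Fb g)^[k - j] ((Fb g)^[i] x) := by rw [heq]
          _ = (Fb g)^[k - j + i] x := (Function.iterate_add_apply _ _ _ _).symm
      exact hmin (k - j + i) (by omega) (e ▸ hk)
    intro i j hi hj heq
    rcases lt_trichotomy i j with h' | h' | h'
    · exact absurd heq (key i j h' hj)
    · exact h'
    · exact absurd heq.symm (key j i h' hi)
  have := orbit_inj_card g x hinj hu.symm
  exact ⟨k, by omega, hk⟩

lemma mem_Hstep_univ (g : V → Option V) (H : Finset V) (v : V) :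
    v ∈ FriendNet.Hstep g Finset.univ H ↔ v ∈ H ∨ g v ∈ H.image some := by
  simp only [FriendNet.Hstep, FriendNet.Psi, Finset.mem_union, Finset.mem_inter,
    Finset.mem_filter, Finset.mem_univ, true_and, and_true, Finset.mem_image]
  constructor
  · rintro (h | ⟨-, u, hu, hgu⟩)
    · exact Or.inl h
    · exact Or.inr ⟨u, hu, hgu.symm⟩
  · rintro (h | ⟨u, hu, hgu⟩)
    · exact Or.inl h
    · by_cases hv : v ∈ H
      · exact Or.inl hv
      · exact Or.inr ⟨hv, u, hu, hgu.symm⟩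

lemma mem_iter_Hstep (g : V → Option V) (H : Finset V) :
    ∀ (n : ℕ) (v : V), v ∈ (FriendNet.Hstep g Finset.univ)^[n] H ↔
      ∃ k ≤ n, (Fb g)^[k] (some v) ∈ H.image some := by
  intro n
  induction n with
  | zero =>
    intro v
    simp only [Function.iterate_zero_apply]
    constructor
    · intro hv
      exact ⟨0, le_refl 0, Finset.mem_image.mpr ⟨v, hv, rfl⟩⟩
    · rintro ⟨k, hk, hm⟩
      interval_cases k
      obtain ⟨u, hu, he⟩ := Finset.mem_image.mp hm
      simpa [Option.some_injective V he] using hu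
  | succ n ih =>
    intro v
    rw [Function.iterate_succ_apply', mem_Hstep_univ]
    constructor
    · rintro (hv | hgv)
      · obtain ⟨k, hk, hm⟩ := (ih v).mp hv
        exact ⟨k, by omega, hm⟩
      · obtain ⟨u, hu, he⟩ := Finset.mem_image.mp hgv
        obtain ⟨k, hk, hm⟩ := (ih u).mp hu
        refine ⟨k + 1, by omega, ?_⟩
        have : (Fb g)^[k + 1] (some v) = (Fb g)^[k] (g v) := by
          rw [Function.iterate_succ_apply]; rfl
        rw [this, ← he]
        exact hm
    · rintro ⟨k, hk, hm⟩
      cases k with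
      | zero =>
        obtain ⟨u, hu, he⟩ := Finset.mem_image.mp hm
        have : v ∈ H := by
          have := Option.some_injective V he
          exact this ▸ hu
        exact Or.inl ((ih v).mpr ⟨0, Nat.zero_le n,
          Finset.mem_image.mpr ⟨v, this, rfl⟩⟩)
      | succ k' =>
        have e : (Fb g)^[k' + 1] (some v) = (Fb g)^[k'] (g v) := by
          rw [Function.iterate_succ_apply]; rfl
        rw [e] at hm
        cases hgv : g v with
        | none =>
          rw [hgv, Fb_iterate_none] at hm
          obtain ⟨u, -, he⟩ := Finset.mem_image.mp hm
          exact absurd he (by simp)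
        | some u =>
          rw [hgv] at hm
          refine Or.inr ?_
          exact Finset.mem_image.mpr ⟨u, (ih u).mpr ⟨k', by omega, hm⟩, rfl⟩

lemma traceAux_spec (g : V → Option V) (Ns : Finset V) (t : V) :
    ∀ (m n : ℕ) (u : V) (acc : Finset (Option V)),
    (Fb g)^[n] (some t) = some u →
    Fintype.card V ≤ m + n →
    (∀ o, o ∈ acc ↔ ∃ i ≤ n, o = (Fb g)^[i] (some t)) →
    (∀ i j, i ≤ n → j ≤ n → (Fb g)^[i] (some t) = (Fb g)^[j] (some t) → i = j) →
    (∀ i ≤ n, (Fb g)^[i] (some t) ∉ Ns.image some) →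
    (none ∉ traceAux g Ns m u acc ↔
      ∃ k, (Fb g)^[n + k + 1] (some t) ∈ Ns.image some) := by
  intro m
  induction m with
  | zero =>
    intro n u acc hn hfuel hacc hinj hns
    exfalso
    have := orbit_inj_card g (some t) hinj hn
    omega
  | succ m ih =>
    intro n u acc hn hfuel hacc hinj hns
    have hstep : (Fb g)^[n + 1] (some t) = g u := by
      rw [Function.iterate_succ_apply', hn]; rfl
    cases hgu : g u with
    | none =>
      simp only [traceAux, hgu]
      have hrhs : ¬ ∃ k, (Fb g)^[n + k + 1] (some t) ∈ Ns.image some := by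
        rintro ⟨k, hk⟩
        have e : (Fb g)^[n + k + 1] (some t) = (Fb g)^[k] ((Fb g)^[n + 1] (some t)) := by
          rw [← Function.iterate_add_apply]
          congr 1
          omega
        rw [e, hstep, hgu, Fb_iterate_none] at hk
        obtain ⟨w, -, hw⟩ := Finset.mem_image.mp hk
        exact nomatch hw
      exact iff_of_false (by simp) hrhs
    | some v =>
      by_cases hv : (some v : Option V) ∈ acc
      · simp only [traceAux, hgu, if_pos hv]
        have hrhs : ¬ ∃ k, (Fb g)^[n + k + 1] (some t) ∈ Ns.image some := by
          obtain ⟨i, hi, hie⟩ := (hacc (some v)).mp hv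
          have hcyc : (Fb g)^[n + 1] (some t) = (Fb g)^[i] (some t) := by
            rw [hstep, hgu, hie]
          rintro ⟨k, hk⟩
          obtain ⟨j, hj, hje⟩ := orbit_cycle g (some t) hi hcyc (n + k + 1)
          rw [hje] at hk
          exact hns j hj hk
        exact iff_of_false (by simp) hrhs
      · by_cases hNs : v ∈ Ns
        · simp only [traceAux, hgu, if_neg hv, if_pos hNs]
          have hlhs : (none : Option V) ∉ acc := by
            intro hmem
            obtain ⟨i, hi, hie⟩ := (hacc none).mp hmem
            obtain ⟨w, hw⟩ := Fb_some_of_le g hn hi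
            rw [hw] at hie
            exact nomatch hie
          have hrhs : ∃ k, (Fb g)^[n + k + 1] (some t) ∈ Ns.image some :=
            ⟨0, by rw [show n + 0 + 1 = n + 1 by omega, hstep, hgu];
                   exact Finset.mem_image.mpr ⟨v, hNs, rfl⟩⟩
          exact iff_of_true hlhs hrhs
        · simp only [traceAux, hgu, if_neg hv, if_neg hNs]
          have hn' : (Fb g)^[n + 1] (some t) = some v := by rw [hstep, hgu]
          have hacc' : ∀ o, o ∈ insert (some v) acc ↔
              ∃ i ≤ n + 1, o = (Fb g)^[i] (some t) := by
            intro o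
            rw [Finset.mem_insert, hacc o]
            constructor
            · rintro (rfl | ⟨i, hi, hie⟩)
              · exact ⟨n + 1, le_refl _, hn'.symm⟩
              · exact ⟨i, by omega, hie⟩
            · rintro ⟨i, hi, hie⟩
              rcases Nat.lt_succ_iff_lt_or_eq.mp (Nat.lt_succ_of_le hi) with h' | rfl
              · exact Or.inr ⟨i, by omega, hie⟩
              · exact Or.inl (by rw [hie, hn'])
          have hinj' : ∀ i j, i ≤ n + 1 → j ≤ n + 1 →
              (Fb g)^[i] (some t) = (Fb g)^[j] (some t) → i = j := by
            intro i j hi hj heq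
            rcases Nat.lt_succ_iff_lt_or_eq.mp (Nat.lt_succ_of_le hi) with hi' | rfl
            · rcases Nat.lt_succ_iff_lt_or_eq.mp (Nat.lt_succ_of_le hj) with hj' | rfl
              · exact hinj i j (by omega) (by omega) heq
              · exact absurd ((hacc (some v)).mpr ⟨i, by omega, by rw [heq, hn']⟩) hv
            · rcases Nat.lt_succ_iff_lt_or_eq.mp (Nat.lt_succ_of_le hj) with hj' | rfl
              · exfalso
                apply hv
                exact (hacc (some v)).mpr ⟨j, by omega, by rw [← heq, hn']⟩
              · rfl
          have hns' : ∀ i ≤ n + 1, (Fb g)^[i] (some t) ∉ Ns.image some := by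
            intro i hi
            rcases Nat.lt_succ_iff_lt_or_eq.mp (Nat.lt_succ_of_le hi) with hi' | rfl
            · exact hns i (by omega)
            · rw [hn']
              intro hmem
              obtain ⟨w, hw, he⟩ := Finset.mem_image.mp hmem
              rw [Option.some_injective V he] at hw
              exact hNs hw
          rw [ih (n + 1) v (insert (some v) acc) hn' (by omega) hacc' hinj' hns']
          constructor
          · rintro ⟨k, hk⟩
            exact ⟨k + 1, by rw [show n + (k + 1) + 1 = n + 1 + k + 1 by omega]; exact hk⟩
          · rintro ⟨k, hk⟩
            cases k with
            | zero =>
              exfalso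
              exact hns' (n + 1) (le_refl _) (by rw [show n + 1 = n + 0 + 1 by omega]; exact hk)
            | succ k' =>
              exact ⟨k', by rw [show n + 1 + k' + 1 = n + (k' + 1) + 1 by omega]; exact hk⟩

end Aux

/-- for every realization `g`, `t ∈ H_∞(g, V)` (inviting everyone)
if and only if `g` is a type-1 realization, i.e. `ℵ0 ∉ t(g)`. -/
theorem friended_with_all_invited_iff_type_one (net : FriendNet V) (g : V → Option V)
    (hg : net.IsRealization g) :
    net.t ∈ net.Hinf g Finset.univ ↔ (none : Option V) ∉ net.trace g := by
  classical
  have htNs : net.t ∉ net.Nbr net.s := by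
    simp only [FriendNet.Nbr]
    letI := net.adjDec
    intro hmem
    rw [Finset.mem_filter] at hmem
    exact net.t_not_friend (net.G.adj_symm hmem.2)
  have hR : net.t ∈ net.Hinf g Finset.univ ↔
      ∃ k ≤ Fintype.card V, (Fb g)^[k] (some net.t) ∈ (net.Nbr net.s).image some :=
    mem_iter_Hstep g (net.Nbr net.s) (Fintype.card V) net.t
  have hT : (none : Option V) ∉ net.trace g ↔
      ∃ k, (Fb g)^[0 + k + 1] (some net.t) ∈ (net.Nbr net.s).image some := by
    refine traceAux_spec g (net.Nbr net.s) net.t (Fintype.card V + 1) 0 net.t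
      {some net.t} rfl (by omega) ?_ ?_ ?_
    · intro o
      simp only [Finset.mem_singleton]
      constructor
      · rintro rfl; exact ⟨0, le_refl 0, rfl⟩
      · rintro ⟨i, hi, rfl⟩
        interval_cases i
        rfl
    · intro i j hi hj _
      omega
    · intro i hi
      interval_cases i
      simp only [Function.iterate_zero_apply]
      intro hmem
      obtain ⟨w, hw, he⟩ := Finset.mem_image.mp hmem
      rw [Option.some_injective V he] at hw
      exact htNs hw
  rw [hR, hT]
  constructor
  · rintro ⟨k, hk, hm⟩
    cases k with
    | zero =>
      exfalso
      simp only [Function.iterate_zero_apply] at hm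
      obtain ⟨w, hw, he⟩ := Finset.mem_image.mp hm
      rw [Option.some_injective V he] at hw
      exact htNs hw
    | succ k' =>
      exact ⟨k', by rw [show 0 + k' + 1 = k' + 1 by omega]; exact hm⟩
  · rintro ⟨k, hk⟩
    exact orbit_bounded g (some net.t) (net.Nbr net.s) ⟨0 + k + 1, hk⟩
end

section
/- Let V be a finite set, U a finite family of subsets of V, and p ≤ |U| a positive integer. If V' ⊆ V covers (i.e., contains as subsets) a subfamily U' ⊆ U with |U'| ≥ p, then for every subfamily U'' ⊆ U' with |U''| = p, the set V'' = ⋃_{x∈U''} x covers at least p members of U and satisfies |V''| ≤ |V'|. Consequently, the minimum cardinality of a set covering at least p members of U (the Minimum Subset Cover optimum) equals the minimum of |⋃_{x∈U''} x| over all U'' ⊆ U with |U''| = p (the Minimum p-Union optimum). -/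
lemma aux_sup_sub {V : Type} [DecidableEq V] (U'' : Finset (Finset V)) (W : Finset V)
    (h : ∀ x ∈ U'', x ⊆ W) : U''.sup id ⊆ W :=
  Finset.sup_le h

lemma aux_filter {V : Type} [Fintype V] [DecidableEq V]
    (U U'' : Finset (Finset V)) (hsub : U'' ⊆ U) :
    U'' ⊆ U.filter fun x => x ⊆ U''.sup id := by
  intro x hx
  exact Finset.mem_filter.2 ⟨hsub hx, Finset.le_sup (f := id) hx⟩

/-- if `V' ⊆ V` covers a subfamily `U' ⊆ U` with `|U'| ≥ p`, then for
every `U'' ⊆ U'` with `|U''| = p`, the union `V'' = ⋃_{x ∈ U''} x` covers at least `p`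
members of `U` and `|V''| ≤ |V'|`. Consequently, the optimum of the Minimum Subset Cover
problem equals the optimum of the Minimum p-Union problem. -/
theorem msc_reduces_to_mpu {V : Type} [Fintype V] [DecidableEq V]
    (U : Finset (Finset V)) (p : ℕ) (hp : 0 < p) (hpU : p ≤ U.card) :
    (∀ (V' : Finset V) (U' : Finset (Finset V)), U' ⊆ U → (∀ x ∈ U', x ⊆ V') →
      p ≤ U'.card → ∀ U'' ⊆ U', U''.card = p →
        p ≤ (U.filter fun x => x ⊆ U''.sup id).card ∧ (U''.sup id).card ≤ V'.card) ∧
    sInf {k : ℕ | ∃ W : Finset V, W.card = k ∧ p ≤ (U.filter fun x => x ⊆ W).card} =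
      sInf {k : ℕ |
        ∃ U'' : Finset (Finset V), U'' ⊆ U ∧ U''.card = p ∧ (U''.sup id).card = k} := by
  constructor
  · intro V' U' hU'U hcov hpcard U'' hU''U' hU''card
    constructor
    · calc p = U''.card := hU''card.symm
        _ ≤ _ := Finset.card_le_card (aux_filter U U'' (hU''U'.trans hU'U))
    · exact Finset.card_le_card (aux_sup_sub U'' V' fun x hx => hcov x (hU''U' hx))
  · -- sets
    have hR : ∀ k ∈ {k : ℕ | ∃ U'' : Finset (Finset V), U'' ⊆ U ∧ U''.card = p ∧
        (U''.sup id).card = k},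
        k ∈ {k : ℕ | ∃ W : Finset V, W.card = k ∧ p ≤ (U.filter fun x => x ⊆ W).card} := by
      rintro k ⟨U'', hsub, hcard, hk⟩
      refine ⟨U''.sup id, hk, ?_⟩
      calc p = U''.card := hcard.symm
        _ ≤ _ := Finset.card_le_card (aux_filter U U'' hsub)
    have hRne : ∃ k, k ∈ {k : ℕ | ∃ U'' : Finset (Finset V), U'' ⊆ U ∧ U''.card = p ∧
        (U''.sup id).card = k} := by
      obtain ⟨U'', hsub, hcard⟩ := Finset.exists_subset_card_eq hpU
      exact ⟨_, U'', hsub, hcard, rfl⟩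
    apply le_antisymm
    · obtain ⟨k, hk⟩ := hRne
      refine le_csInf ⟨k, hk⟩ ?_
      rintro m ⟨U'', hsub, hcard, hm⟩
      exact Nat.sInf_le (hR m ⟨U'', hsub, hcard, hm⟩)
    · obtain ⟨k0, hk0⟩ := hRne
      refine le_csInf ⟨k0, hR k0 hk0⟩ ?_
      rintro m ⟨W, hW, hpf⟩
      obtain ⟨U'', hsub, hcard⟩ := Finset.exists_subset_card_eq hpf
      have h1 : U'' ⊆ U := hsub.trans (Finset.filter_subset _ _)
      have h2 : U''.sup id ⊆ W := aux_sup_sub U'' W fun x hx =>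
        (Finset.mem_filter.1 (hsub hx)).2
      have h3 : (U''.sup id).card ≤ m := hW ▸ Finset.card_le_card h2
      exact le_trans (Nat.sInf_le ⟨U'', h1, hcard, rfl⟩) h3
end

section
/- Suppose α ∈ (0,1], ε0, ε1 ∈ (0,1), and p* > 0 satisfies |p* − p_max| ≤ ε0·p_max. Let B_l = (g_1,…,g_l) be a sequence of l realizations such that |F(B_l,I)/l − f(I)| ≤ ε1·p* for every I ⊆ V, and let β = (α − ε1(1+ε0))/(1 + ε1(1+ε0)). Then every invitation set I_α ⊆ V with f(I_α) ≥ α·p_max satisfies F(B_l, I_α) ≥ β·F(B_l,V); consequently, an output I* of a (2√|B_l^1|)-approximation algorithm for the induced minimum subset cover instance with coverage requirement ⌈β·|B_l^1|⌉ satisfies |I*| ≤ 2√|B_l^1|·|I_α|. -/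
open Finset MeasureTheory

variable {V : Type} [Fintype V] [DecidableEq V]

lemma F_eq_nat (net : FriendNet V) {l : ℕ} (B : Fin l → V → Option V) (I : Finset V) :
    ∃ n : ℕ, net.F B I = n := by
  classical
  refine ⟨(Finset.univ.filter fun i => net.trace (B i) ⊆ I.image some).card, ?_⟩
  unfold FriendNet.F FriendNet.fg
  rw [Finset.sum_boole]

lemma F_nonneg (net : FriendNet V) {l : ℕ} (B : Fin l → V → Option V) (I : Finset V) :
    0 ≤ net.F B I := by
  unfold FriendNet.F FriendNet.fg
  apply Finset.sum_nonneg
  intro i _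
  positivity

/-- Lemma 7: under Equation System 1, every invitation set `I_α` with
`f(I_α) ≥ α·p_max` satisfies `F(B_l, I_α) ≥ β·F(B_l, V)`; consequently, any output `I*`
of a `(2√|B_l^1|)`-approximation algorithm for the induced minimum subset cover instance
with coverage requirement `⌈β·|B_l^1|⌉` satisfies `|I*| ≤ 2√|B_l^1|·|I_α|`
(recall `|B_l^1| = F(B_l, V)`). -/
theorem solution_size_bounded (net : FriendNet V)
    (α ε0 ε1 pstar β : ℝ) {l : ℕ} (B : Fin l → V → Option V)
    (hB : ∀ i : Fin l, net.IsRealization (B i))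
    (hα : α ∈ Set.Ioc (0 : ℝ) 1)
    (hε0 : ε0 ∈ Set.Ioo (0 : ℝ) 1) (hε1 : ε1 ∈ Set.Ioo (0 : ℝ) 1)
    (hpstar : 0 < pstar)
    (hest : |pstar - net.pmax| ≤ ε0 * net.pmax)
    (hF : ∀ I : Finset V, |net.F B I / (l : ℝ) - net.f I| ≤ ε1 * pstar)
    (hβ : β = (α - ε1 * (1 + ε0)) / (1 + ε1 * (1 + ε0))) :
    ∀ Iα : Finset V, α * net.pmax ≤ net.f Iα →
      β * net.F B Finset.univ ≤ net.F B Iα ∧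
      ∀ Istar : Finset V,
        ((⌈β * net.F B Finset.univ⌉ : ℝ) ≤ net.F B Istar ∧
          ∀ I' : Finset V, (⌈β * net.F B Finset.univ⌉ : ℝ) ≤ net.F B I' →
            (Istar.card : ℝ) ≤ 2 * Real.sqrt (net.F B Finset.univ) * (I'.card : ℝ)) →
        (Istar.card : ℝ) ≤ 2 * Real.sqrt (net.F B Finset.univ) * (Iα.card : ℝ) := by
  intro Iα hIα
  obtain ⟨hα0, hα1⟩ := hα
  obtain ⟨hε00, hε01⟩ := hε0
  obtain ⟨hε10, hε11⟩ := hε1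
  -- pmax > 0
  have hpm : 0 < net.pmax := by
    by_contra h
    push_neg at h
    have h1 : ε0 * net.pmax ≤ 0 := mul_nonpos_of_nonneg_of_nonpos hε00.le h
    have h2 : |pstar - net.pmax| ≤ 0 := hest.trans h1
    have h3 : pstar = net.pmax := by
      have := abs_nonneg (pstar - net.pmax)
      have : |pstar - net.pmax| = 0 := le_antisymm h2 this
      linarith [abs_eq_zero.mp this]
    linarith
  -- pstar ≤ (1+ε0) * pmax
  have hps_le : pstar ≤ (1 + ε0) * net.pmax := by
    have := (abs_le.mp hest).2
    linarith
  -- f I ≤ pmax for all I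
  have hbdd : BddAbove (Set.range net.f) := (Set.finite_range _).bddAbove
  have hfle : ∀ I : Finset V, net.f I ≤ net.pmax := fun I => le_ciSup hbdd I
  -- main inequality
  have hmain : β * net.F B Finset.univ ≤ net.F B Iα := by
    rcases Nat.eq_zero_or_pos l with hl | hl
    · subst hl
      have h1 : net.F B Finset.univ = 0 := by
        unfold FriendNet.F; simp
      have h2 : net.F B Iα = 0 := by
        unfold FriendNet.F; simp
      rw [h1, h2, mul_zero]
    · have hlpos : (0 : ℝ) < l := by exact_mod_cast hl
      have hD : (0 : ℝ) < 1 + ε1 * (1 + ε0) := by nlinarith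
      have hIαlow : (l : ℝ) * (net.pmax * (α - ε1 * (1 + ε0))) ≤ net.F B Iα := by
        have h1 := (abs_le.mp (hF Iα)).1
        have h2 : net.f Iα - ε1 * pstar ≤ net.F B Iα / l := by linarith
        have h3 : α * net.pmax - ε1 * ((1 + ε0) * net.pmax) ≤ net.F B Iα / l := by
          have : ε1 * pstar ≤ ε1 * ((1 + ε0) * net.pmax) :=
            mul_le_mul_of_nonneg_left hps_le hε10.le
          linarith
        have h4 := (le_div_iff₀ hlpos).mp h3
        nlinarith
      have hUup : net.F B Finset.univ ≤ (l : ℝ) * (net.pmax * (1 + ε1 * (1 + ε0))) := by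
        have h1 := (abs_le.mp (hF Finset.univ)).2
        have h2 : net.F B Finset.univ / l ≤ net.pmax + ε1 * pstar := by
          have := hfle Finset.univ
          linarith
        have h3 : net.F B Finset.univ / l ≤ net.pmax + ε1 * ((1 + ε0) * net.pmax) := by
          have : ε1 * pstar ≤ ε1 * ((1 + ε0) * net.pmax) :=
            mul_le_mul_of_nonneg_left hps_le hε10.le
          linarith
        rw [div_le_iff₀ hlpos] at h3
        nlinarith
      have hβD : β * (1 + ε1 * (1 + ε0)) = α - ε1 * (1 + ε0) := by
        rw [hβ]; field_simp
      rcases le_or_gt (α - ε1 * (1 + ε0)) 0 with hc | hc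
      · have hβ0 : β ≤ 0 := by
          rw [hβ]; exact div_nonpos_of_nonpos_of_nonneg hc hD.le
        have := F_nonneg net B Iα
        have := F_nonneg net B Finset.univ
        nlinarith
      · have hβ0 : 0 ≤ β := by
          rw [hβ]; positivity
        have h4 : β * net.F B Finset.univ ≤
            β * ((l : ℝ) * (net.pmax * (1 + ε1 * (1 + ε0)))) :=
          mul_le_mul_of_nonneg_left hUup hβ0
        have h5 : β * ((l : ℝ) * (net.pmax * (1 + ε1 * (1 + ε0)))) =
            (l : ℝ) * (net.pmax * (α - ε1 * (1 + ε0))) := by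
          rw [show β * ((l : ℝ) * (net.pmax * (1 + ε1 * (1 + ε0)))) =
              (l : ℝ) * (net.pmax * (β * (1 + ε1 * (1 + ε0)))) by ring, hβD]
        linarith
  refine ⟨hmain, ?_⟩
  rintro Istar ⟨-, h2⟩
  apply h2 Iα
  obtain ⟨n, hn⟩ := F_eq_nat net B Iα
  have hceil : ⌈β * net.F B Finset.univ⌉ ≤ (n : ℤ) := by
    apply Int.ceil_le.mpr
    push_cast
    rw [← hn]
    exact hmain
  rw [hn]
  exact_mod_cast hceil
end
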